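/- arXiv:2009.06550 — 5 statements merged into one kernel-verified Lean document; each statement's English description precedes it below -/
import Mathlib

section
/- If there exists x ∈ relint C with −A x ∈ relint K (strict feasibility of the primal recession cone), then the polar cone of {x ∈ C : A x ∈ −K} equals A*(K*) − C* exactly (no closure needed): ({x ∈ C : A x ∈ −K})° = A*(K*) − C*. -/
open RealInnerProductSpace Set Pointwise

variable {E E' : Type*}
  [NormedAddCommGroup E] [InnerProductSpace ℝ E] [FiniteDimensional ℝ E]
  [NormedAddCommGroup E'] [InnerProductSpace ℝ E'] [FiniteDimensional ℝ E']

/-- A nonempty closed convex cone containing `0`. -/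
structure IsClosedConvexCone {F : Type*} [NormedAddCommGroup F] [InnerProductSpace ℝ F]
    (K : Set F) : Prop where
  closed : IsClosed K
  convex : Convex ℝ K
  smul_mem : ∀ ⦃x⦄, x ∈ K → ∀ ⦃t : ℝ⦄, 0 ≤ t → t • x ∈ K
  zero_mem : (0 : F) ∈ K

/-- The dual cone `S* = {y : ⟨x,y⟩ ≥ 0 ∀ x ∈ S}`. -/
def dualCone {F : Type*} [NormedAddCommGroup F] [InnerProductSpace ℝ F] (S : Set F) : Set F :=
  {y | ∀ x ∈ S, 0 ≤ ⟪x, y⟫}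

/-- The polar cone `S° = {y : ⟨x,y⟩ ≤ 0 ∀ x ∈ S}`. -/
def polarCone {F : Type*} [NormedAddCommGroup F] [InnerProductSpace ℝ F] (S : Set F) : Set F :=
  {y | ∀ x ∈ S, ⟪x, y⟫ ≤ 0}

/-- Primal feasible set `X(b) = {x ∈ C : b - A x ∈ K}`. -/
def Xfeas (A : E →ₗ[ℝ] E') (K : Set E') (C : Set E) (b : E') : Set E :=
  {x | x ∈ C ∧ b - A x ∈ K}

/-- Dual feasible set `Y(c) = {y ∈ K* : A* y - c ∈ C*}`. -/
def Yfeas (A : E →ₗ[ℝ] E') (K : Set E') (C : Set E) (c : E) : Set E' :=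
  {y | y ∈ dualCone K ∧ LinearMap.adjoint A y - c ∈ dualCone C}

/-- Primal optimal value `P* = sup {⟨c,x⟩ : x ∈ X(b)}`. -/
noncomputable def Pval (A : E →ₗ[ℝ] E') (K : Set E') (C : Set E) (b : E') (c : E) : ℝ :=
  sSup ((fun x => ⟪c, x⟫) '' Xfeas A K C b)

/-- Dual optimal value `D* = inf {⟨b,y⟩ : y ∈ Y(c)}`. -/
noncomputable def Dval (A : E →ₗ[ℝ] E') (K : Set E') (C : Set E) (b : E') (c : E) : ℝ :=
  sInf ((fun y => ⟪b, y⟫) '' Yfeas A K C c)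

/-- Recession cone of the primal feasible region: `{x ∈ C : A x ∈ -K}`. -/
def recXSet (A : E →ₗ[ℝ] E') (K : Set E') (C : Set E) : Set E :=
  {x | x ∈ C ∧ A x ∈ -K}

/-- Recession cone of the dual feasible region: `{y ∈ K* : A* y ∈ C*}`. -/
def recYSet (A : E →ₗ[ℝ] E') (K : Set E') (C : Set E) : Set E' :=
  {y | y ∈ dualCone K ∧ LinearMap.adjoint A y ∈ dualCone C}

/-- `X(b)` is almost feasible. -/
def AlmostFeasX (A : E →ₗ[ℝ] E') (K : Set E') (C : Set E) (b : E') : Prop :=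
  ∀ ε : ℝ, 0 < ε → ∃ bε : E', ‖bε‖ ≤ ε ∧ (Xfeas A K C (b + bε)).Nonempty

/-- `Y(c)` is almost feasible. -/
def AlmostFeasY (A : E →ₗ[ℝ] E') (K : Set E') (C : Set E) (c : E) : Prop :=
  ∀ ε : ℝ, 0 < ε → ∃ cε : E, ‖cε‖ ≤ ε ∧ (Yfeas A K C (c + cε)).Nonempty


open Filter

set_option linter.unusedSectionVars false

private lemma stmt9.cone_add_mem {F : Type*} [NormedAddCommGroup F] [Module ℝ F]
    {D : Set F} (hconv : Convex ℝ D)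
    (hsmul : ∀ ⦃x⦄, x ∈ D → ∀ ⦃t : ℝ⦄, 0 ≤ t → t • x ∈ D)
    {a b : F} (ha : a ∈ D) (hb : b ∈ D) : a + b ∈ D := by
  have h := hconv ha hb (by norm_num : (0:ℝ) ≤ 1/2) (by norm_num : (0:ℝ) ≤ 1/2) (by norm_num)
  have h2 := hsmul h (by norm_num : (0:ℝ) ≤ 2)
  have : (2:ℝ) • ((1/2 : ℝ) • a + (1/2 : ℝ) • b) = a + b := by module
  rwa [this] at h2

section StmtNineAux

variable {F G : Type*}
  [NormedAddCommGroup F] [NormedSpace ℝ F] [FiniteDimensional ℝ F]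
  [NormedAddCommGroup G] [NormedSpace ℝ G] [FiniteDimensional ℝ G]

/-- Image of a closed convex cone under a linear map is closed, provided
`ker L ∩ D` is symmetric. -/
private lemma stmt9.isClosed_image_cone (L : F →ₗ[ℝ] G) (D : Set F)
    (hcl : IsClosed D) (hconv : Convex ℝ D)
    (hsmul : ∀ ⦃x⦄, x ∈ D → ∀ ⦃t : ℝ⦄, 0 ≤ t → t • x ∈ D)
    (hzero : (0:F) ∈ D)
    (hker : ∀ d ∈ D, L d = 0 → -d ∈ D) : IsClosed (L '' D) := by
  classical
  have hadd : ∀ ⦃a b : F⦄, a ∈ D → b ∈ D → a + b ∈ D := fun a b ha hb =>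
    stmt9.cone_add_mem hconv hsmul ha hb
  set V : Submodule ℝ F :=
    { carrier := {d | d ∈ D ∧ L d = 0}
      zero_mem' := ⟨hzero, map_zero L⟩
      add_mem' := fun ha hb => ⟨hadd ha.1 hb.1, by simp [ha.2, hb.2]⟩
      smul_mem' := by
        intro c d hd
        rcases le_or_gt 0 c with hc | hc
        · exact ⟨hsmul hd.1 hc, by simp [hd.2]⟩
        · refine ⟨?_, by simp [hd.2]⟩
          have : c • d = (-c) • (-d) := by module
          rw [this]
          exact hsmul (hker d hd.1 hd.2) (by linarith) } with hV
  have hVsubD : (V : Set F) ⊆ D := fun d hd => hd.1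
  have hVker : ∀ d ∈ V, L d = 0 := fun d hd => hd.2
  obtain ⟨W, hW⟩ := Submodule.exists_isCompl V
  set D' : Set F := D ∩ (W : Set F) with hD'
  have himg : L '' D = L '' D' := by
    apply Subset.antisymm
    · rintro _ ⟨d, hd, rfl⟩
      set v : F := (V.projectionOnto W hW d : F) with hv
      have hvV : v ∈ V := (V.projectionOnto W hW d).2
      have hsum := (Submodule.projection_add_projection_eq_self hW d :
        (V.projectionOnto W hW d : F) + (W.projectionOnto V hW.symm d : F) = d)
      refine ⟨d - v, ⟨?_, ?_⟩, ?_⟩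
      · have hneg : -v ∈ D := hVsubD (neg_mem hvV)
        have := hadd hd hneg
        simpa [sub_eq_add_neg] using this
      · have : d - v = (W.projectionOnto V hW.symm d : F) := by
          exact (eq_sub_of_add_eq' hsum).symm
        rw [this]
        exact (W.projectionOnto V hW.symm d).2
      · have : L v = 0 := hVker _ hvV
        simp [map_sub, this]
    · exact image_mono (inter_subset_left)
  rw [himg]
  have hD'cl : IsClosed D' := hcl.inter (W.closed_of_finiteDimensional)
  have hD'smul : ∀ ⦃x⦄, x ∈ D' → ∀ ⦃t : ℝ⦄, 0 ≤ t → t • x ∈ D' := by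
    intro x hx t ht
    exact ⟨hsmul hx.1 ht, W.smul_mem t hx.2⟩
  have hker' : ∀ d ∈ D', L d = 0 → d = 0 := by
    intro d hd hLd
    have h1 : d ∈ V := ⟨hd.1, hLd⟩
    have : d ∈ V ⊓ W := ⟨h1, hd.2⟩
    rwa [hW.inf_eq_bot, Submodule.mem_bot] at this
  obtain ⟨c, hc, hbound⟩ : ∃ c : ℝ, 0 < c ∧ ∀ d ∈ D', c * ‖d‖ ≤ ‖L d‖ := by
    by_cases hS : (D' ∩ Metric.sphere 0 1).Nonempty
    · have hScomp : IsCompact (D' ∩ Metric.sphere 0 1) :=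
        Metric.isCompact_of_isClosed_isBounded (hD'cl.inter Metric.isClosed_sphere)
          (Metric.isBounded_sphere.subset inter_subset_right)
      have hcont : ContinuousOn (fun d => ‖L d‖) (D' ∩ Metric.sphere 0 1) :=
        (L.continuous_of_finiteDimensional.norm).continuousOn
      obtain ⟨d0, hd0, hmin'⟩ := hScomp.exists_isMinOn hS hcont
      have hmin : ∀ d ∈ D' ∩ Metric.sphere 0 1, ‖L d0‖ ≤ ‖L d‖ := fun d hd => hmin' hd
      have hd0norm : ‖d0‖ = 1 := by simpa using hd0.2
      have hc0 : 0 < ‖L d0‖ := by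
        rcases (norm_nonneg (L d0)).lt_or_eq with h | h
        · exact h
        · exfalso
          have : L d0 = 0 := by rwa [eq_comm, norm_eq_zero] at h
          have := hker' d0 hd0.1 this
          rw [this] at hd0norm; simp at hd0norm
      refine ⟨‖L d0‖, hc0, ?_⟩
      intro d hd
      rcases eq_or_ne d 0 with rfl | hdne
      · simp
      · have hdn : 0 < ‖d‖ := norm_pos_iff.mpr hdne
        have hu : ‖d‖⁻¹ • d ∈ D' ∩ Metric.sphere 0 1 := by
          refine ⟨hD'smul hd (by positivity), ?_⟩
          simp [norm_smul, abs_of_pos (inv_pos.mpr hdn), inv_mul_cancel₀ hdn.ne']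
        have := hmin _ hu
        rw [map_smul, norm_smul, Real.norm_eq_abs, abs_of_pos (inv_pos.mpr hdn)] at this
        calc ‖L d0‖ * ‖d‖ ≤ (‖d‖⁻¹ * ‖L d‖) * ‖d‖ := by nlinarith
          _ = ‖L d‖ := by field_simp
    · refine ⟨1, one_pos, ?_⟩
      intro d hd
      rcases eq_or_ne d 0 with rfl | hdne
      · simp
      · exfalso
        have hdn : 0 < ‖d‖ := norm_pos_iff.mpr hdne
        exact hS ⟨‖d‖⁻¹ • d, hD'smul hd (by positivity),
          by simp [norm_smul, abs_of_pos (inv_pos.mpr hdn), inv_mul_cancel₀ hdn.ne']⟩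
  rw [← isSeqClosed_iff_isClosed]
  intro x g hx hlim
  choose d hdD hLd using fun n => hx n
  obtain ⟨R, hR⟩ : ∃ R : ℝ, ∀ n, ‖x n‖ ≤ R := by
    obtain ⟨R, hR⟩ := (hlim.norm).bddAbove_range
    exact ⟨R, fun n => hR ⟨n, rfl⟩⟩
  have hdbdd : ∀ n, d n ∈ Metric.closedBall (0:F) (c⁻¹ * R) := by
    intro n
    have h1 := hbound _ (hdD n)
    rw [hLd n] at h1
    have h2 : ‖d n‖ ≤ c⁻¹ * R := by
      rw [← le_div_iff₀' hc] at h1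
      calc ‖d n‖ ≤ ‖x n‖ / c := h1
        _ ≤ R / c := by gcongr; exact hR n
        _ = c⁻¹ * R := by ring
    simpa [Metric.mem_closedBall, dist_eq_norm] using h2
  obtain ⟨a, _, φ, hφ, hconv'⟩ :=
    tendsto_subseq_of_bounded Metric.isBounded_closedBall hdbdd
  have haD' : a ∈ D' := hD'cl.mem_of_tendsto hconv' (Eventually.of_forall fun n => hdD _)
  have hLa : L a = g := by
    have h1 : Tendsto (fun n => L (d (φ n))) atTop (nhds (L a)) :=
      (L.continuous_of_finiteDimensional.tendsto a).comp hconv'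
    have h2 : Tendsto (fun n => L (d (φ n))) atTop (nhds g) := by
      simp only [hLd]
      exact hlim.comp hφ.tendsto_atTop
    exact tendsto_nhds_unique h1 h2
  exact ⟨a, haD', hLa⟩

end StmtNineAux

section StmtNineAux2

variable {F : Type*} [NormedAddCommGroup F] [InnerProductSpace ℝ F]

/-- If `y` is nonneg on convex `K` and vanishes at a relative interior point,
then it vanishes on all of `K`. -/
private lemma stmt9.relint_inner_eq_zero {K : Set F} {y k0 : F}
    (hy : ∀ k ∈ K, 0 ≤ ⟪k, y⟫) (hk0 : k0 ∈ intrinsicInterior ℝ K)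
    (h0 : ⟪k0, y⟫ = 0) : ∀ k ∈ K, ⟪k, y⟫ = 0 := by
  intro k hk
  obtain ⟨y0, hy0int, hy0⟩ := mem_intrinsicInterior.mp hk0
  rw [mem_interior_iff_mem_nhds, Metric.mem_nhds_iff] at hy0int
  obtain ⟨ε, hε, hball⟩ := hy0int
  set T : ℝ := min (ε / (2 * (‖k0 - k‖ + 1))) 1 with hT
  have hTpos : 0 < T := by
    apply lt_min _ one_pos
    apply div_pos hε
    positivity
  have hmemspan : AffineMap.lineMap k k0 (1 + T) ∈ affineSpan ℝ K :=
    AffineMap.lineMap_mem _ (subset_affineSpan ℝ K hk)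
      (subset_affineSpan ℝ K (intrinsicInterior_subset hk0))
  have hdist : dist (⟨AffineMap.lineMap k k0 (1 + T), hmemspan⟩ : affineSpan ℝ K) y0 < ε := by
    rw [Subtype.dist_eq]
    simp only [hy0]
    have : (AffineMap.lineMap k k0 (1 + T) : F) = k0 + T • (k0 - k) := by
      rw [AffineMap.lineMap_apply_module]
      module
    rw [this, dist_eq_norm]
    simp only [add_sub_cancel_left, norm_smul, Real.norm_eq_abs, abs_of_pos hTpos]
    have h1 : T ≤ ε / (2 * (‖k0 - k‖ + 1)) := min_le_left _ _
    have h2 : ‖k0 - k‖ < ‖k0 - k‖ + 1 := by linarith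
    calc T * ‖k0 - k‖ ≤ (ε / (2 * (‖k0 - k‖ + 1))) * (‖k0 - k‖ + 1) := by
          apply mul_le_mul h1 (le_of_lt h2) (norm_nonneg _)
          positivity
      _ = ε / 2 := by field_simp
      _ < ε := by linarith
  have hmemK : (AffineMap.lineMap k k0 (1 + T) : F) ∈ K := hball hdist
  have := hy _ hmemK
  rw [AffineMap.lineMap_apply_module] at this
  have hexp : ⟪(1 - (1 + T)) • k + (1 + T) • k0, y⟫ = -T * ⟪k, y⟫ + (1 + T) * ⟪k0, y⟫ := by
    rw [inner_add_left, real_inner_smul_left, real_inner_smul_left]; ring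
  rw [hexp, h0] at this
  nlinarith [hy k hk]

private lemma stmt9.dualCone_eq_innerDualCone [CompleteSpace F] (S : Set F) :
    dualCone S = (ProperCone.innerDual S : Set F) := rfl

private lemma stmt9.isClosed_dualCone (S : Set F) : IsClosed (dualCone S) := by
  have : dualCone S = ⋂ x ∈ S, {y | 0 ≤ ⟪x, y⟫} := by ext; simp [dualCone]
  rw [this]
  exact isClosed_biInter fun x _ => isClosed_le continuous_const (continuous_const.inner continuous_id)

private lemma stmt9.convex_dualCone (S : Set F) : Convex ℝ (dualCone S) := by
  intro y hy z hz a b ha hb _ x hx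
  rw [inner_add_right, real_inner_smul_right, real_inner_smul_right]
  exact add_nonneg (mul_nonneg ha (hy x hx)) (mul_nonneg hb (hz x hx))

private lemma stmt9.smul_mem_dualCone {S : Set F} {y : F} (hy : y ∈ dualCone S)
    {t : ℝ} (ht : 0 ≤ t) : t • y ∈ dualCone S := by
  intro x hx
  rw [real_inner_smul_right]
  exact mul_nonneg ht (hy x hx)

private lemma stmt9.zero_mem_dualCone (S : Set F) : (0:F) ∈ dualCone S := by
  intro x hx; rw [inner_zero_right]

private lemma stmt9.bipolar [CompleteSpace F] (S : Set F) (h : IsClosedConvexCone S) :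
    dualCone (dualCone S) = S := by
  set SC : ConvexCone ℝ F :=
    { carrier := S
      smul_mem' := fun c hc x hx => h.smul_mem hx hc.le
      add_mem' := fun x hx y hy => stmt9.cone_add_mem h.convex h.smul_mem hx hy }
  have hS : (SC : Set F) = S := rfl
  have hbp := ProperCone.innerDual_innerDual
    (⟨SC.toPointedCone h.zero_mem, by exact h.closed⟩ : ProperCone ℝ F)
  exact congrArg (fun Q : ProperCone ℝ F => (Q : Set F)) hbp

end StmtNineAux2

theorem stmt9 (A : E →ₗ[ℝ] E') (K : Set E') (C : Set E)
    (hK : IsClosedConvexCone K) (hC : IsClosedConvexCone C)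
    (hstrict : ∃ x ∈ intrinsicInterior ℝ C, -A x ∈ intrinsicInterior ℝ K) :
    polarCone (recXSet A K C) =
      (⇑(LinearMap.adjoint A) '' dualCone K) + (-(dualCone C)) := by
  obtain ⟨x0, hx0C, hx0K⟩ := hstrict
  have hx0C' : x0 ∈ C := intrinsicInterior_subset hx0C
  have hx0K' : -A x0 ∈ K := intrinsicInterior_subset hx0K
  set S : Set E := (⇑(LinearMap.adjoint A) '' dualCone K) + (-(dualCone C)) with hSdef
  set L : E' × E →ₗ[ℝ] E :=
    (LinearMap.adjoint A).comp (LinearMap.fst ℝ E' E) - LinearMap.snd ℝ E' E with hLdef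
  set D : Set (E' × E) := (dualCone K) ×ˢ (dualCone C) with hDdef
  have hLapp : ∀ p : E' × E, L p = LinearMap.adjoint A p.1 - p.2 := fun p => rfl
  have hLD : L '' D = S := by
    ext w
    constructor
    · rintro ⟨⟨y, z⟩, ⟨hy, hz⟩, rfl⟩
      rw [hLapp, sub_eq_add_neg, hSdef]
      exact Set.add_mem_add ⟨y, hy, rfl⟩ (by rwa [Set.mem_neg, neg_neg])
    · intro hw
      rw [hSdef] at hw
      obtain ⟨a, ha, b, hb, rfl⟩ := Set.mem_add.mp hw
      obtain ⟨y, hy, rfl⟩ := ha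
      rw [Set.mem_neg] at hb
      exact ⟨(y, -b), ⟨hy, hb⟩, by rw [hLapp]; simp [sub_eq_add_neg]⟩
  have hDcl : IsClosed D := (stmt9.isClosed_dualCone K).prod (stmt9.isClosed_dualCone C)
  have hDconv : Convex ℝ D := (stmt9.convex_dualCone K).prod (stmt9.convex_dualCone C)
  have hDsmul : ∀ ⦃p : E' × E⦄, p ∈ D → ∀ ⦃t : ℝ⦄, 0 ≤ t → t • p ∈ D :=
    fun p hp t ht => ⟨stmt9.smul_mem_dualCone hp.1 ht, stmt9.smul_mem_dualCone hp.2 ht⟩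
  have hDzero : (0 : E' × E) ∈ D := ⟨stmt9.zero_mem_dualCone K, stmt9.zero_mem_dualCone C⟩
  have hker : ∀ p ∈ D, L p = 0 → -p ∈ D := by
    rintro ⟨y, z⟩ ⟨hy, hz⟩ hL
    rw [hLapp] at hL
    have hzy : LinearMap.adjoint A y = z := sub_eq_zero.mp hL
    have e1 : ⟪x0, z⟫ = ⟪y, A x0⟫ := by
      rw [← hzy, real_inner_comm, LinearMap.adjoint_inner_left]
    have e2 : ⟪-A x0, y⟫ = -⟪y, A x0⟫ := by
      rw [inner_neg_left, real_inner_comm]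
    have h1 : 0 ≤ ⟪x0, z⟫ := hz x0 hx0C'
    have h2 : 0 ≤ ⟪-A x0, y⟫ := hy _ hx0K'
    have hz0 : ⟪x0, z⟫ = 0 := by linarith
    have hy0 : ⟪-A x0, y⟫ = 0 := by linarith
    have hyzero : ∀ k ∈ K, ⟪k, y⟫ = 0 := stmt9.relint_inner_eq_zero hy hx0K hy0
    have hzzero : ∀ c ∈ C, ⟪c, z⟫ = 0 := stmt9.relint_inner_eq_zero hz hx0C hz0
    refine ⟨fun k hk => ?_, fun c hc => ?_⟩
    · show (0:ℝ) ≤ ⟪k, -y⟫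
      rw [inner_neg_right, hyzero k hk, neg_zero]
    · show (0:ℝ) ≤ ⟪c, -z⟫
      rw [inner_neg_right, hzzero c hc, neg_zero]
  have hScl : IsClosed S := by
    rw [← hLD]; exact stmt9.isClosed_image_cone L D hDcl hDconv hDsmul hDzero hker
  have hScc : IsClosedConvexCone S := by
    refine ⟨hScl, ?_, ?_, ?_⟩
    · rw [← hLD]; exact hDconv.is_linear_image L.isLinear
    · intro x hx t ht
      rw [← hLD] at hx ⊢
      obtain ⟨p, hp, rfl⟩ := hx
      exact ⟨t • p, hDsmul hp ht, (L.map_smul t p)⟩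
    · rw [← hLD]; exact ⟨0, hDzero, map_zero L⟩
  have hCbp := stmt9.bipolar C hC
  have hKbp := stmt9.bipolar K hK
  have hSbp := stmt9.bipolar S hScc
  ext w
  constructor
  · intro hw
    rw [← hSbp]
    intro x hx
    have hxC : -x ∈ C := by
      rw [← hCbp]
      intro u hu
      have hmem : -u ∈ S := by
        rw [hSdef]
        have h0img : (0:E) ∈ (⇑(LinearMap.adjoint A) '' dualCone K) :=
          ⟨0, stmt9.zero_mem_dualCone K, map_zero _⟩
        have h2 : -u ∈ -(dualCone C) := by rwa [Set.mem_neg, neg_neg]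
        have := Set.add_mem_add h0img h2
        rwa [zero_add] at this
      have h3 := hx _ hmem
      rw [inner_neg_right]
      rwa [inner_neg_left] at h3
    have hxK : A (-x) ∈ -K := by
      rw [Set.mem_neg, map_neg, neg_neg, ← hKbp]
      intro y hy
      have hmem : LinearMap.adjoint A y ∈ S := by
        rw [hSdef]
        have h1 : LinearMap.adjoint A y ∈ (⇑(LinearMap.adjoint A) '' dualCone K) := ⟨y, hy, rfl⟩
        have h2 : (0:E) ∈ -(dualCone C) := by
          rw [Set.mem_neg, neg_zero]; exact stmt9.zero_mem_dualCone C
        have := Set.add_mem_add h1 h2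
        rwa [add_zero] at this
      have h3 := hx _ hmem
      rwa [LinearMap.adjoint_inner_left] at h3
    have h4 := hw (-x) ⟨hxC, hxK⟩
    rw [inner_neg_left] at h4
    linarith
  · intro hw x hx
    rw [hSdef] at hw
    obtain ⟨a, ha, b, hb, rfl⟩ := Set.mem_add.mp hw
    obtain ⟨y, hy, rfl⟩ := ha
    rw [Set.mem_neg] at hb
    obtain ⟨hxC, hxK⟩ := hx
    rw [Set.mem_neg] at hxK
    have h1 : ⟪x, LinearMap.adjoint A y⟫ ≤ 0 := by
      rw [real_inner_comm, LinearMap.adjoint_inner_left]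
      have h := hy _ hxK
      rw [inner_neg_left, real_inner_comm] at h
      linarith
    have h2 : ⟪x, b⟫ ≤ 0 := by
      have h := hb x hxC
      rw [inner_neg_right] at h
      linarith
    rw [inner_add_right]
    linarith
end

section
/- Suppose {x ∈ C : A x ∈ −K} = {0} (the primal recession cone is trivial) and either C is a linear subspace of E or A(relint C) intersects the linear span of K. Then for every b ∈ E' the following three statements are equivalent: (1) b belongs to the dual cone of rec Y := {y ∈ K* : A* y ∈ C*}; (2) the primal feasible set X(b) is nonempty; (3) X(b) is almost feasible. -/
open RealInnerProductSpace Set Pointwise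

variable {E E' : Type*}
  [NormedAddCommGroup E] [InnerProductSpace ℝ E] [FiniteDimensional ℝ E]
  [NormedAddCommGroup E'] [InnerProductSpace ℝ E'] [FiniteDimensional ℝ E']

/-! ### Auxiliary lemmas -/

lemma IsClosedConvexCone.add_mem {F : Type*} [NormedAddCommGroup F] [InnerProductSpace ℝ F]
    {K : Set F} (hK : IsClosedConvexCone K) {a b : F} (ha : a ∈ K) (hb : b ∈ K) :
    a + b ∈ K := by
  have h := hK.convex ha hb (by norm_num : (0:ℝ) ≤ 1/2) (by norm_num : (0:ℝ) ≤ 1/2) (by norm_num)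
  have h2 := hK.smul_mem h (by norm_num : (0:ℝ) ≤ 2)
  have : (2:ℝ) • ((1/2:ℝ) • a + (1/2:ℝ) • b) = a + b := by
    rw [smul_add, smul_smul, smul_smul]; norm_num
  rwa [this] at h2

/-- `X(b)` is nonempty iff `b ∈ A(C) + K`. -/
lemma Xfeas_nonempty_iff (A : E →ₗ[ℝ] E') (K : Set E') (C : Set E) (b : E') :
    (Xfeas A K C b).Nonempty ↔ b ∈ (⇑A '' C) + K := by
  constructor
  · rintro ⟨x, hxC, hxK⟩
    exact Set.mem_add.mpr ⟨A x, ⟨x, hxC, rfl⟩, b - A x, hxK, by abel⟩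
  · intro hb
    rcases Set.mem_add.mp hb with ⟨u, ⟨x, hxC, rfl⟩, k, hkK, h⟩
    exact ⟨x, hxC, by rw [← h]; simpa using hkK⟩

/-- `rec Y = (A(C) + K)*`. -/
lemma recY_eq_dual (A : E →ₗ[ℝ] E') (K : Set E') (C : Set E)
    (hK : IsClosedConvexCone K) (hC : IsClosedConvexCone C) :
    recYSet A K C = dualCone ((⇑A '' C) + K) := by
  ext y
  constructor
  · rintro ⟨hyK, hyC⟩ d hd
    rcases Set.mem_add.mp hd with ⟨u, ⟨x, hxC, rfl⟩, k, hkK, rfl⟩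
    have h1 : 0 ≤ ⟪A x, y⟫ := by
      have := hyC x hxC
      rwa [LinearMap.adjoint_inner_right] at this
    have h2 : 0 ≤ ⟪k, y⟫ := hyK k hkK
    calc (0:ℝ) ≤ ⟪A x, y⟫ + ⟪k, y⟫ := by linarith
      _ = ⟪A x + k, y⟫ := (inner_add_left _ _ _).symm
  · intro hy
    constructor
    · intro k hk
      have := hy (A 0 + k) (Set.mem_add.mpr ⟨A 0, ⟨0, hC.zero_mem, rfl⟩, k, hk, rfl⟩)
      simpa using this
    · intro x hx
      have := hy (A x + 0) (Set.mem_add.mpr ⟨A x, ⟨x, hx, rfl⟩, 0, hK.zero_mem, rfl⟩)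
      rw [LinearMap.adjoint_inner_right]
      simpa using this

/-- Triviality of the primal recession cone makes `A(C) + K` closed. -/
lemma closed_ACK (A : E →ₗ[ℝ] E') (K : Set E') (C : Set E)
    (hK : IsClosedConvexCone K) (hC : IsClosedConvexCone C)
    (htriv : recXSet A K C = {0}) : IsClosed ((⇑A '' C) + K) := by
  have cA : Continuous A := A.continuous_of_finiteDimensional
  rw [← isSeqClosed_iff_isClosed]
  intro d b hd hdb
  have hmem : ∀ n, ∃ xn ∈ C, ∃ kn ∈ K, A xn + kn = d n := by
    intro n
    rcases Set.mem_add.mp (hd n) with ⟨u, ⟨xn, hxn, rfl⟩, kn, hkn, h⟩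
    exact ⟨xn, hxn, kn, hkn, h⟩
  choose x hx k hk hxk using hmem
  by_cases hb : Filter.Tendsto (fun n => ‖x n‖) Filter.atTop Filter.atTop
  · -- unbounded case: contradiction with trivial recession cone
    exfalso
    set u : ℕ → E := fun n => ‖x n‖⁻¹ • x n with hu
    have huC : ∀ n, u n ∈ C := fun n => hC.smul_mem (hx n) (inv_nonneg.mpr (norm_nonneg _))
    have hub : ∀ n, u n ∈ Metric.closedBall (0:E) 1 := by
      intro n
      simp only [Metric.mem_closedBall, dist_zero_right, hu, norm_smul, norm_inv, norm_norm]
      rcases eq_or_ne ‖x n‖ 0 with h | h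
      · simp [h]
      · rw [inv_mul_cancel₀ h]
    obtain ⟨a, _, φ, hφ, hua⟩ :=
      tendsto_subseq_of_bounded Metric.isBounded_closedBall hub
    have hφt : Filter.Tendsto φ Filter.atTop Filter.atTop := hφ.tendsto_atTop
    have haC : a ∈ C := hC.closed.mem_of_tendsto hua (Filter.Eventually.of_forall
      fun n => huC (φ n))
    -- ‖a‖ = 1
    have hnx : Filter.Tendsto (fun n => ‖x (φ n)‖) Filter.atTop Filter.atTop := hb.comp hφt
    have hna : ‖a‖ = 1 := by
      have h1 : Filter.Tendsto (fun n => ‖u (φ n)‖) Filter.atTop (nhds ‖a‖) :=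
        (continuous_norm.tendsto a).comp hua
      have h2 : ∀ᶠ n in Filter.atTop, ‖u (φ n)‖ = 1 := by
        filter_upwards [hnx.eventually_ge_atTop 1] with n hn
        have hne : ‖x (φ n)‖ ≠ 0 := by positivity
        simp only [hu, norm_smul, norm_inv, norm_norm, inv_mul_cancel₀ hne]
      exact tendsto_nhds_unique (h1.congr' h2) tendsto_const_nhds
    -- the scaled slack converges to -A a
    have hinv : Filter.Tendsto (fun n => ‖x (φ n)‖⁻¹) Filter.atTop (nhds 0) :=
      tendsto_inv_atTop_zero.comp hnx
    have hdφ : Filter.Tendsto (fun n => d (φ n)) Filter.atTop (nhds b) := hdb.comp hφt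
    have hsd : Filter.Tendsto (fun n => ‖x (φ n)‖⁻¹ • d (φ n)) Filter.atTop
        (nhds ((0:ℝ) • b)) := hinv.smul hdφ
    rw [zero_smul] at hsd
    have hAu : Filter.Tendsto (fun n => A (u (φ n))) Filter.atTop (nhds (A a)) :=
      (cA.tendsto a).comp hua
    have hks : Filter.Tendsto (fun n => ‖x (φ n)‖⁻¹ • k (φ n)) Filter.atTop (nhds (-(A a))) := by
      have heq : ∀ n, ‖x (φ n)‖⁻¹ • k (φ n) = ‖x (φ n)‖⁻¹ • d (φ n) - A (u (φ n)) := by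
        intro n
        rw [hu]
        rw [map_smul, ← smul_sub]
        congr 1
        rw [← hxk (φ n)]
        abel
      have := hsd.sub hAu
      rw [zero_sub] at this
      exact this.congr (fun n => (heq n).symm)
    have hAaK : -(A a) ∈ K := hK.closed.mem_of_tendsto hks (Filter.Eventually.of_forall
      fun n => hK.smul_mem (hk (φ n)) (inv_nonneg.mpr (norm_nonneg _)))
    have : a ∈ recXSet A K C := ⟨haC, Set.mem_neg.mpr hAaK⟩
    rw [htriv] at this
    simp only [Set.mem_singleton_iff] at this
    rw [this] at hna
    simp at hna
  · -- bounded subsequence case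
    have key : ∃ R : ℝ, ∃ᶠ n in Filter.atTop, ‖x n‖ ≤ R := by
      by_contra h
      push_neg at h
      apply hb
      rw [Filter.tendsto_atTop]
      intro R
      filter_upwards [h R] with n hn
      linarith [hn]
    obtain ⟨R, hR⟩ := key
    obtain ⟨φ, hφ, hφR⟩ := Filter.extraction_of_frequently_atTop hR
    obtain ⟨a, _, ψ, hψ, hxa⟩ := tendsto_subseq_of_bounded
      (Metric.isBounded_closedBall (x := (0:E)) (r := R))
      (x := fun n => x (φ n))
      (fun n => by simpa [Metric.mem_closedBall, dist_zero_right] using hφR n)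
    set σ : ℕ → ℕ := φ ∘ ψ with hσdef
    have hσ : Filter.Tendsto σ Filter.atTop Filter.atTop := (hφ.comp hψ).tendsto_atTop
    have hxa' : Filter.Tendsto (fun n => x (σ n)) Filter.atTop (nhds a) := hxa
    have haC : a ∈ C := hC.closed.mem_of_tendsto hxa'
      (Filter.Eventually.of_forall fun n => hx (σ n))
    have hdσ : Filter.Tendsto (fun n => d (σ n)) Filter.atTop (nhds b) := hdb.comp hσ
    have hAx : Filter.Tendsto (fun n => A (x (σ n))) Filter.atTop (nhds (A a)) :=
      (cA.tendsto a).comp hxa'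
    have hkσ : Filter.Tendsto (fun n => k (σ n)) Filter.atTop (nhds (b - A a)) := by
      have := hdσ.sub hAx
      exact this.congr (fun n => by rw [← hxk (σ n)]; abel)
    have hbK : b - A a ∈ K := hK.closed.mem_of_tendsto hkσ
      (Filter.Eventually.of_forall fun n => hk (σ n))
    exact Set.mem_add.mpr ⟨A a, ⟨a, haC, rfl⟩, b - A a, hbK, by abel⟩

/-- the bipolar theorem, specialised -/
lemma dual_dual_eq (A : E →ₗ[ℝ] E') (K : Set E') (C : Set E)
    (hK : IsClosedConvexCone K) (hC : IsClosedConvexCone C)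
    (htriv : recXSet A K C = {0}) :
    dualCone (dualCone ((⇑A '' C) + K)) = (⇑A '' C) + K := by
  set D : Set E' := (⇑A '' C) + K with hD
  have hDconv : Convex ℝ D := ((hC.convex.is_linear_image ⟨A.map_add, A.map_smul⟩)).add hK.convex
  have hDsmul : ∀ ⦃c : ℝ⦄, 0 < c → ∀ ⦃z : E'⦄, z ∈ D → c • z ∈ D := by
    rintro c hc z hz
    rcases Set.mem_add.mp hz with ⟨u, ⟨xx, hxx, rfl⟩, kk, hkk, rfl⟩
    refine Set.mem_add.mpr ⟨A (c • xx), ⟨c • xx, hC.smul_mem hxx hc.le, rfl⟩,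
      c • kk, hK.smul_mem hkk hc.le, ?_⟩
    rw [map_smul, ← smul_add]
  have hDadd : ∀ ⦃z : E'⦄, z ∈ D → ∀ ⦃w : E'⦄, w ∈ D → z + w ∈ D := by
    intro z hz w hw
    have h := hDconv hz hw (by norm_num : (0:ℝ) ≤ 1/2) (by norm_num : (0:ℝ) ≤ 1/2) (by norm_num)
    have h2 := hDsmul (by norm_num : (0:ℝ) < 2) h
    have : (2:ℝ) • ((1/2:ℝ) • z + (1/2:ℝ) • w) = z + w := by
      rw [smul_add, smul_smul, smul_smul]; norm_num
    rwa [this] at h2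
  set Dc : ConvexCone ℝ E' := ⟨D, hDsmul, hDadd⟩ with hDc
  have hne : (Dc : Set E').Nonempty :=
    ⟨0, Set.mem_add.mpr ⟨A 0, ⟨0, hC.zero_mem, rfl⟩, 0, hK.zero_mem, by simp⟩⟩
  have hcl : IsClosed (Dc : Set E') := closed_ACK A K C hK hC htriv
  have hbi := ProperCone.innerDual_innerDual
    ({ toSubmodule := Dc.toPointedCone (ConvexCone.Pointed.of_nonempty_of_isClosed hne hcl),
       isClosed' := hcl } : ProperCone ℝ E')
  ext y
  exact Set.ext_iff.mp (congrArg (fun P : ProperCone ℝ E' => (P : Set E')) hbi) y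

theorem stmt13 (A : E →ₗ[ℝ] E') (K : Set E') (C : Set E)
    (hK : IsClosedConvexCone K) (hC : IsClosedConvexCone C)
    (htriv : recXSet A K C = {0})
    (hcond : (∃ S : Submodule ℝ E, (S : Set E) = C) ∨
      ((⇑A '' intrinsicInterior ℝ C) ∩ (Submodule.span ℝ K : Set E')).Nonempty) :
    ∀ b : E',
      (b ∈ dualCone (recYSet A K C) ↔ (Xfeas A K C b).Nonempty) ∧
      ((Xfeas A K C b).Nonempty ↔ AlmostFeasX A K C b) := by
  intro b
  set D : Set E' := (⇑A '' C) + K with hD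
  have hcl : IsClosed D := closed_ACK A K C hK hC htriv
  have hmemD : (Xfeas A K C b).Nonempty ↔ b ∈ D := Xfeas_nonempty_iff A K C b
  constructor
  · rw [hmemD, recY_eq_dual A K C hK hC, dual_dual_eq A K C hK hC htriv]
  · rw [hmemD]
    constructor
    · intro hb ε hε
      exact ⟨0, by simpa using hε.le, by rw [add_zero]; exact hmemD.mpr hb⟩
    · intro h
      rw [← hcl.closure_eq]
      rw [Metric.mem_closure_iff]
      intro ε hε
      obtain ⟨bε, hbε, hne⟩ := h (ε/2) (by linarith)
      refine ⟨b + bε, (Xfeas_nonempty_iff A K C _).mp hne, ?_⟩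
      rw [dist_eq_norm]
      have : b - (b + bε) = -bε := by abel
      rw [this, norm_neg]
      linarith
end

section
/- If there exists x ∈ relint C with −A x ∈ relint K (i.e., the homogeneous system X(0) = {x ∈ C : A x ∈ −K} is strictly feasible), then for every b in the linear span of K there exists x ∈ relint C with b − A x ∈ relint K (i.e., X(b) is strictly feasible). -/
open RealInnerProductSpace Set Pointwise

variable {E E' : Type*}
  [NormedAddCommGroup E] [InnerProductSpace ℝ E] [FiniteDimensional ℝ E]
  [NormedAddCommGroup E'] [InnerProductSpace ℝ E'] [FiniteDimensional ℝ E']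

lemma mem_relint_iff {F : Type*} [NormedAddCommGroup F] [InnerProductSpace ℝ F]
    {s : Set F} {u : F} :
    u ∈ intrinsicInterior ℝ s ↔ u ∈ affineSpan ℝ s ∧
      ∃ ε > 0, ∀ z ∈ (affineSpan ℝ s : Set F), dist z u < ε → z ∈ s := by
  rw [intrinsicInterior]
  constructor
  · rintro ⟨y, hy, rfl⟩
    refine ⟨y.2, ?_⟩
    obtain ⟨ε, hε, hball⟩ := Metric.isOpen_iff.1 isOpen_interior y hy
    refine ⟨ε, hε, fun z hz hdz => ?_⟩
    have : (⟨z, hz⟩ : affineSpan ℝ s) ∈ Metric.ball y ε := by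
      simpa [Metric.mem_ball, Subtype.dist_eq] using hdz
    exact interior_subset (s := ((↑) ⁻¹' s : Set (affineSpan ℝ s))) (hball this)
  · rintro ⟨hu, ε, hε, h⟩
    refine ⟨⟨u, hu⟩, ?_, rfl⟩
    rw [mem_interior_iff_mem_nhds, Metric.mem_nhds_iff]
    refine ⟨ε, hε, fun z hz => ?_⟩
    exact h z z.2 (by simpa [Metric.mem_ball, Subtype.dist_eq] using hz)

lemma span_eq_affineSpan {F : Type*} [NormedAddCommGroup F] [InnerProductSpace ℝ F]
    {s : Set F} (h0 : (0:F) ∈ s) : (affineSpan ℝ s : Set F) = Submodule.span ℝ s := by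
  rw [← affineSpan_insert_zero, insert_eq_self.2 h0]

theorem stmt16 (A : E →ₗ[ℝ] E') (K : Set E') (C : Set E)
    (hK : IsClosedConvexCone K) (hC : IsClosedConvexCone C)
    (hstrict : ∃ x ∈ intrinsicInterior ℝ C, -A x ∈ intrinsicInterior ℝ K) :
    ∀ b ∈ Submodule.span ℝ K,
      ∃ x ∈ intrinsicInterior ℝ C, b - A x ∈ intrinsicInterior ℝ K := by
  obtain ⟨x₀, hx₀, hu⟩ := hstrict
  set u : E' := -A x₀ with hu_def
  have spanK_eq : (affineSpan ℝ K : Set E') = Submodule.span ℝ K := span_eq_affineSpan hK.zero_mem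
  have spanC_eq : (affineSpan ℝ C : Set E) = Submodule.span ℝ C := span_eq_affineSpan hC.zero_mem
  obtain ⟨huK, ε, hε, hballK⟩ := mem_relint_iff.1 hu
  obtain ⟨hxC, δ, hδ, hballC⟩ := mem_relint_iff.1 hx₀
  intro b hb
  set t : ℝ := max 1 (2 * ‖b‖ / ε + 1) with ht_def
  have ht1 : (1:ℝ) ≤ t := le_max_left _ _
  have ht : 0 < t := lt_of_lt_of_le one_pos ht1
  have hbt : ‖b‖ < t * ε / 2 := by
    have h2 : 2 * ‖b‖ / ε + 1 ≤ t := le_max_right _ _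
    have : 2 * ‖b‖ / ε < t := lt_of_lt_of_le (by linarith) h2
    rw [div_lt_iff₀ hε] at this
    linarith
  refine ⟨t • x₀, ?_, ?_⟩
  · rw [mem_relint_iff]
    constructor
    · rw [← SetLike.mem_coe, spanC_eq]
      have : x₀ ∈ Submodule.span ℝ C := by
        have h' : x₀ ∈ (affineSpan ℝ C : Set E) := hxC
        rwa [spanC_eq] at h'
      exact Submodule.smul_mem _ _ this
    · refine ⟨t * δ, by positivity, fun z hz hdz => ?_⟩
      have hw : t⁻¹ • z ∈ (affineSpan ℝ C : Set E) := by
        rw [spanC_eq] at hz ⊢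
        exact Submodule.smul_mem _ _ hz
      have hwd : dist (t⁻¹ • z) x₀ < δ := by
        rw [dist_eq_norm] at hdz ⊢
        have : t⁻¹ • z - x₀ = t⁻¹ • (z - t • x₀) := by
          rw [smul_sub, smul_smul, inv_mul_cancel₀ ht.ne', one_smul]
        rw [this, norm_smul, norm_inv, Real.norm_of_nonneg ht.le]
        rw [inv_mul_lt_iff₀ ht]
        exact hdz
      have : t⁻¹ • z ∈ C := hballC _ hw hwd
      have := hC.smul_mem this ht.le
      rwa [smul_smul, mul_inv_cancel₀ ht.ne', one_smul] at this
  · have hAx : b - A (t • x₀) = b + t • u := by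
      rw [map_smul, hu_def, smul_neg]; abel
    rw [hAx, mem_relint_iff]
    have huS : u ∈ Submodule.span ℝ K := by
      have h' : u ∈ (affineSpan ℝ K : Set E') := huK
      rwa [spanK_eq] at h'
    constructor
    · rw [← SetLike.mem_coe, spanK_eq]
      exact Submodule.add_mem _ hb (Submodule.smul_mem _ _ huS)
    · refine ⟨t * ε / 2, by positivity, fun z hz hdz => ?_⟩
      have hzS : z ∈ Submodule.span ℝ K := by rwa [spanK_eq] at hz
      have hw : t⁻¹ • z ∈ (affineSpan ℝ K : Set E') := by
        rw [spanK_eq]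
        exact Submodule.smul_mem _ _ hzS
      have hwd : dist (t⁻¹ • z) u < ε := by
        rw [dist_eq_norm] at hdz ⊢
        have heq : t⁻¹ • z - u = t⁻¹ • (z - (b + t • u)) + t⁻¹ • b := by
          rw [smul_sub, smul_add, smul_smul, inv_mul_cancel₀ ht.ne', one_smul]
          abel
        calc ‖t⁻¹ • z - u‖ ≤ ‖t⁻¹ • (z - (b + t • u))‖ + ‖t⁻¹ • b‖ := by
              rw [heq]; exact norm_add_le _ _
          _ < ε / 2 + ε / 2 := by
              apply add_lt_add
              · rw [norm_smul, norm_inv, Real.norm_of_nonneg ht.le, inv_mul_lt_iff₀ ht]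
                calc ‖z - (b + t • u)‖ < t * ε / 2 := hdz
                  _ = t * (ε / 2) := by ring
              · rw [norm_smul, norm_inv, Real.norm_of_nonneg ht.le, inv_mul_lt_iff₀ ht]
                calc ‖b‖ < t * ε / 2 := hbt
                  _ = t * (ε / 2) := by ring
          _ = ε := by ring
      have : t⁻¹ • z ∈ K := hballK _ hw hwd
      have := hK.smul_mem this ht.le
      rwa [smul_smul, mul_inv_cancel₀ ht.ne', one_smul] at this
end

section
/- Let S ⊆ E be a nonempty closed convex set, let rec S = {r ∈ E : x + μ r ∈ S for all x ∈ S and μ ≥ 0} be its recession cone, and let dom σ_S = {c ∈ E : the set {⟨c,x⟩ : x ∈ S} is bounded above} be its barrier cone. Then relint(dom σ_S) = relint((rec S)°) ⊆ dom σ_S ⊆ (rec S)° = (relint(rec S))° = cl(dom σ_S). -/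
open RealInnerProductSpace Set Pointwise

variable {E E' : Type*}
  [NormedAddCommGroup E] [InnerProductSpace ℝ E] [FiniteDimensional ℝ E]
  [NormedAddCommGroup E'] [InnerProductSpace ℝ E'] [FiniteDimensional ℝ E']

section AuxRelint
open Topology

variable {V : Type*} [NormedAddCommGroup V] [NormedSpace ℝ V]

theorem aux_closure_interior {w : Set V} (hw : Convex ℝ w) (hne : (interior w).Nonempty) :
    closure (interior w) = closure w := by
  refine subset_antisymm (closure_mono interior_subset) (closure_minimal ?_ isClosed_closure)
  obtain ⟨y, hy⟩ := hne
  intro x hx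
  have h1 : openSegment ℝ x y ⊆ interior w := hw.openSegment_self_interior_subset_interior hx hy
  have h2 : x ∈ closure (openSegment ℝ x y) := by
    rw [closure_openSegment]; exact left_mem_segment ℝ x y
  exact closure_mono h1 h2

theorem aux_interior_closure {w : Set V} (hw : Convex ℝ w) (hne : (interior w).Nonempty) :
    interior (closure w) = interior w := by
  refine subset_antisymm ?_ (interior_mono subset_closure)
  intro x hx
  obtain ⟨y, hy⟩ := hne
  rcases eq_or_ne x y with rfl | hxy
  · exact hy
  obtain ⟨δ, hδ, hball⟩ := Metric.isOpen_iff.1 isOpen_interior x hx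
  have hxy' : (0:ℝ) < ‖x - y‖ := by
    rw [norm_pos_iff, sub_ne_zero]; exact hxy
  set ε : ℝ := δ / (2 * ‖x - y‖) with hε
  have hεpos : 0 < ε := div_pos hδ (by positivity)
  set z : V := x + ε • (x - y) with hz
  have hzball : z ∈ Metric.ball x δ := by
    rw [Metric.mem_ball, dist_eq_norm]
    have : z - x = ε • (x - y) := by rw [hz]; abel
    rw [this, norm_smul, Real.norm_eq_abs, abs_of_pos hεpos, hε]
    rw [div_mul_eq_mul_div, mul_comm 2 ‖x - y‖, ← div_div, mul_div_assoc]
    rw [div_self hxy'.ne', mul_one]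
    linarith
  have hzcl : z ∈ closure w := interior_subset (hball hzball)
  have hmem : x ∈ openSegment ℝ y z := by
    refine ⟨ε / (1 + ε), 1 / (1 + ε), by positivity, by positivity, ?_, ?_⟩
    · field_simp; ring
    · rw [hz]
      have h1ε : (1 + ε) ≠ 0 := by positivity
      match_scalars <;> field_simp <;> ring
  exact hw.openSegment_interior_closure_subset_interior hy hzcl hmem

open Topology in
theorem aux_intrinsic_eq_interior {w : Set V} (h : affineSpan ℝ w = ⊤) :
    intrinsicInterior ℝ w = interior w := by
  have hrange : range ((↑) : affineSpan ℝ w → V) = univ := by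
    rw [Subtype.range_coe]; rw [h]; rfl
  have hemb : IsOpenEmbedding ((↑) : affineSpan ℝ w → V) :=
    ⟨IsEmbedding.subtypeVal, by rw [hrange]; exact isOpen_univ⟩
  rw [intrinsicInterior]
  apply subset_antisymm
  · refine interior_maximal ?_ (hemb.isOpenMap _ isOpen_interior)
    exact (image_mono interior_subset).trans (image_preimage_subset _ _)
  · intro x hx
    refine ⟨⟨x, subset_affineSpan ℝ w (interior_subset hx)⟩, ?_, rfl⟩
    refine interior_maximal (preimage_mono interior_subset)
      (continuous_subtype_val.isOpen_preimage _ isOpen_interior) ?_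
    exact hx

theorem aux_package {E : Type*} [NormedAddCommGroup E] [InnerProductSpace ℝ E] [FiniteDimensional ℝ E] {s : Set E} (hs : Convex ℝ s) (hne : s.Nonempty) :
    intrinsicInterior ℝ (closure s) = intrinsicInterior ℝ s ∧
      closure (intrinsicInterior ℝ s) = closure s := by
  obtain ⟨p, hp⟩ := hne
  set A := affineSpan ℝ s with hA
  set V := A.direction with hV
  let ψ : V →ᵃⁱ[ℝ] E :=
    (AffineIsometryEquiv.constVAdd ℝ E p).toAffineIsometry.comp V.subtypeₗᵢ.toAffineIsometry
  have hψ : ∀ v : V, ψ v = p + (v : E) := fun v => by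
    simp [ψ, AffineIsometryEquiv.constVAdd, vadd_eq_add, add_comm]; rfl
  have hpA : p ∈ A := subset_affineSpan ℝ s hp
  have hrange : range ψ = (A : Set E) := by
    ext x
    constructor
    · rintro ⟨v, rfl⟩
      rw [hψ]
      have : (p + (v : E)) -ᵥ p ∈ A.direction := by
        simpa [vsub_eq_sub] using v.2
      exact (AffineSubspace.vsub_right_mem_direction_iff_mem hpA _).1 this
    · intro hx
      have hv : x - p ∈ A.direction := by
        have := (AffineSubspace.vsub_right_mem_direction_iff_mem hpA x).2 hx
        simpa [vsub_eq_sub] using this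
      exact ⟨⟨x - p, hv⟩, by rw [hψ]; simp⟩
  have hsub : s ⊆ range ψ := by rw [hrange]; exact subset_affineSpan ℝ s
  set w : Set V := ψ ⁻¹' s with hw
  have hws : ψ '' w = s := image_preimage_eq_of_subset hsub
  have hwconv : Convex ℝ w := hs.affine_preimage ψ.toAffineMap
  have hwne : w.Nonempty := ⟨0, by simp only [hw, mem_preimage, hψ]; simpa using hp⟩
  have hinj : Function.Injective ψ := ψ.injective
  have hspan : affineSpan ℝ w = ⊤ := by
    have h1 : (affineSpan ℝ w).map ψ.toAffineMap = affineSpan ℝ s := by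
      rw [AffineSubspace.map_span, ψ.coe_toAffineMap, hws]
    have h2 : ψ '' (affineSpan ℝ w : Set V) = (A : Set E) := by
      rw [← ψ.coe_toAffineMap, ← AffineSubspace.coe_map, h1]
    have h3 : ψ '' (univ : Set V) = (A : Set E) := by rw [image_univ, hrange]
    have h4 : (affineSpan ℝ w : Set V) = univ := by
      apply hinj.image_injective; rw [h2, h3]
    exact (AffineSubspace.ext_iff _ _).2 (by rw [h4]; rfl)
  have hcemb : IsClosedEmbedding ψ := ψ.isometry.isClosedEmbedding
  have hclosure : closure s = ψ '' closure w := by rw [← hws, hcemb.closure_image_eq]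
  have hint_ne : (interior w).Nonempty :=
    (hwconv.interior_nonempty_iff_affineSpan_eq_top).2 hspan
  have hspan_cl : affineSpan ℝ (closure w) = ⊤ :=
    top_le_iff.1 (hspan ▸ affineSpan_mono ℝ subset_closure)
  have eq1 : intrinsicInterior ℝ s = ψ '' interior w := by
    rw [← hws, AffineIsometry.image_intrinsicInterior, aux_intrinsic_eq_interior hspan]
  have eq2 : intrinsicInterior ℝ (closure s) = ψ '' interior (closure w) := by
    rw [hclosure, AffineIsometry.image_intrinsicInterior, aux_intrinsic_eq_interior hspan_cl]
  constructor
  · rw [eq1, eq2, aux_interior_closure hwconv hint_ne]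
  · rw [eq1, hcemb.closure_image_eq, aux_closure_interior hwconv hint_ne,
      ← hcemb.closure_image_eq, hws]

end AuxRelint

theorem stmt17 (S : Set E) (hSne : S.Nonempty) (hScl : IsClosed S) (hSconv : Convex ℝ S) :
    intrinsicInterior ℝ {c : E | BddAbove ((fun x => ⟪c, x⟫) '' S)} =
      intrinsicInterior ℝ (polarCone {r : E | ∀ x ∈ S, ∀ μ : ℝ, 0 ≤ μ → x + μ • r ∈ S}) ∧
    intrinsicInterior ℝ (polarCone {r : E | ∀ x ∈ S, ∀ μ : ℝ, 0 ≤ μ → x + μ • r ∈ S}) ⊆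
      {c : E | BddAbove ((fun x => ⟪c, x⟫) '' S)} ∧
    {c : E | BddAbove ((fun x => ⟪c, x⟫) '' S)} ⊆
      polarCone {r : E | ∀ x ∈ S, ∀ μ : ℝ, 0 ≤ μ → x + μ • r ∈ S} ∧
    polarCone {r : E | ∀ x ∈ S, ∀ μ : ℝ, 0 ≤ μ → x + μ • r ∈ S} =
      polarCone (intrinsicInterior ℝ {r : E | ∀ x ∈ S, ∀ μ : ℝ, 0 ≤ μ → x + μ • r ∈ S}) ∧
    polarCone {r : E | ∀ x ∈ S, ∀ μ : ℝ, 0 ≤ μ → x + μ • r ∈ S} =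
      closure {c : E | BddAbove ((fun x => ⟪c, x⟫) '' S)} := by
  set K : Set E := {r : E | ∀ x ∈ S, ∀ μ : ℝ, 0 ≤ μ → x + μ • r ∈ S} with hKdef
  set B : Set E := {c : E | BddAbove ((fun x => ⟪c, x⟫) '' S)} with hBdef
  obtain ⟨x₀, hx₀⟩ := hSne
  -- basic facts about B
  have hB0 : (0 : E) ∈ B := by
    refine ⟨0, ?_⟩
    rintro _ ⟨x, hx, rfl⟩
    simp
  have hBadd : ∀ c₁ ∈ B, ∀ c₂ ∈ B, c₁ + c₂ ∈ B := by
    rintro c₁ ⟨M₁, hM₁⟩ c₂ ⟨M₂, hM₂⟩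
    refine ⟨M₁ + M₂, ?_⟩
    rintro _ ⟨x, hx, rfl⟩
    have h1 := hM₁ ⟨x, hx, rfl⟩
    have h2 := hM₂ ⟨x, hx, rfl⟩
    simp only at h1 h2 ⊢
    rw [inner_add_left]
    exact add_le_add h1 h2
  have hBsmul : ∀ c ∈ B, ∀ t : ℝ, 0 ≤ t → t • c ∈ B := by
    rintro c ⟨M, hM⟩ t ht
    refine ⟨t * M, ?_⟩
    rintro _ ⟨x, hx, rfl⟩
    have h1 := hM ⟨x, hx, rfl⟩
    simp only at h1 ⊢
    rw [real_inner_smul_left]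
    exact mul_le_mul_of_nonneg_left h1 ht
  have hBconv : Convex ℝ B := by
    intro c₁ h₁ c₂ h₂ a b ha hb hab
    exact hBadd _ (hBsmul _ h₁ a ha) _ (hBsmul _ h₂ b hb)
  -- basic facts about K
  have hK0 : (0 : E) ∈ K := by
    intro x hx μ hμ; simpa using hx
  have hKne : K.Nonempty := ⟨0, hK0⟩
  have hKconv : Convex ℝ K := by
    intro r₁ h₁ r₂ h₂ a b ha hb hab x hx μ hμ
    obtain rfl : b = 1 - a := by linarith
    have e : x + μ • (a • r₁ + (1 - a) • r₂) = a • (x + μ • r₁) + (1 - a) • (x + μ • r₂) := by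
      match_scalars <;> ring
    rw [e]
    exact hSconv (h₁ x hx μ hμ) (h₂ x hx μ hμ) ha hb hab
  have hKclosed : IsClosed K := by
    have : K = ⋂ (x : S), ⋂ (μ : {t : ℝ // 0 ≤ t}), {r : E | (x : E) + (μ : ℝ) • r ∈ S} := by
      ext r
      simp only [mem_iInter, mem_setOf_eq, Subtype.forall, hKdef]
    rw [this]
    exact isClosed_iInter fun x => isClosed_iInter fun μ =>
      hScl.preimage (continuous_const.add (continuous_id.const_smul _))
  -- B ⊆ K°
  have hBK : B ⊆ polarCone K := by
    rintro c ⟨M, hM⟩ r hr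
    by_contra hpos
    push_neg at hpos
    have hrc : 0 < ⟪r, c⟫ := hpos
    have hx₀M : ⟪c, x₀⟫ ≤ M := hM ⟨x₀, hx₀, rfl⟩
    set μ : ℝ := (M - ⟪c, x₀⟫ + 1) / ⟪r, c⟫ with hμdef
    have hμ : 0 ≤ μ := div_nonneg (by linarith) hrc.le
    have hmem : x₀ + μ • r ∈ S := hr x₀ hx₀ μ hμ
    have hle : ⟪c, x₀ + μ • r⟫ ≤ M := hM ⟨_, hmem, rfl⟩
    rw [inner_add_right, real_inner_smul_right] at hle
    have hcrc : ⟪c, r⟫ = ⟪r, c⟫ := real_inner_comm r c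
    rw [hcrc, hμdef, div_mul_cancel₀ _ hrc.ne'] at hle
    linarith
  -- separation of a point from S
  have hsep : ∀ b : E, b ∉ S → ∃ c : E, ∃ u : ℝ, (∀ a ∈ S, ⟪c, a⟫ < u) ∧ u < ⟪c, b⟫ := by
    intro b hb
    obtain ⟨f, u, hfu, hub⟩ := geometric_hahn_banach_closed_point hSconv hScl hb
    refine ⟨(InnerProductSpace.toDual ℝ E).symm f, u, fun a ha => ?_, ?_⟩
    · rw [InnerProductSpace.toDual_symm_apply]; exact hfu a ha
    · rw [InnerProductSpace.toDual_symm_apply]; exact hub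
  -- the cone of B
  set Bcone : ConvexCone ℝ E :=
    { carrier := B
      smul_mem' := fun t ht c hc => hBsmul c hc t ht.le
      add_mem' := fun c₁ h₁ c₂ h₂ => hBadd c₁ h₁ c₂ h₂ } with hBcone
  -- K° ⊆ closure B
  have hKpol_sub : polarCone K ⊆ closure B := by
    intro c hc
    by_contra hcB
    have hT : c ∉ Bcone.closure := hcB
    obtain ⟨y, hy1, hy2⟩ := ProperCone.hyperplane_separation'
      ({ toSubmodule := Bcone.closure.toPointedCone (subset_closure hB0),
         isClosed' := isClosed_closure } : ProperCone ℝ E) hT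
    rw [real_inner_comm] at hy2
    have hyK : -y ∈ K := by
      by_contra hny
      rw [hKdef, mem_setOf_eq] at hny
      push_neg at hny
      obtain ⟨x, hx, μ, hμ, hnotin⟩ := hny
      obtain ⟨c', u, h1, h2⟩ := hsep _ hnotin
      have hc'B : c' ∈ B := ⟨u, by rintro _ ⟨a, ha, rfl⟩; exact (h1 a ha).le⟩
      have h0 : 0 ≤ ⟪c', y⟫ := hy1 c' (subset_closure hc'B)
      have hxu : ⟪c', x⟫ < u := h1 x hx
      rw [inner_add_right, real_inner_smul_right, inner_neg_right] at h2
      nlinarith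
    have := hc (-y) hyK
    rw [inner_neg_left] at this
    have : 0 ≤ ⟪y, c⟫ := by
      rw [real_inner_comm]; linarith
    linarith
  have hKpol_closed : IsClosed (polarCone K) := by
    have : polarCone K = ⋂ (x : K), {y : E | ⟪(x : E), y⟫ ≤ 0} := by
      ext y; simp [polarCone, mem_iInter, Subtype.forall]
    rw [this]
    exact isClosed_iInter fun x =>
      isClosed_le (continuous_const.inner continuous_id) continuous_const
  have hKB : polarCone K = closure B :=
    subset_antisymm hKpol_sub (closure_minimal hBK hKpol_closed)
  -- part 4 : K° = (relint K)°
  have hpart4 : polarCone K = polarCone (intrinsicInterior ℝ K) := by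
    apply subset_antisymm
    · intro y hy x hx
      exact hy x (intrinsicInterior_subset hx)
    · intro y hy x hxK
      have hclK : closure (intrinsicInterior ℝ K) = K := by
        rw [(aux_package hKconv hKne).2, hKclosed.closure_eq]
      have hx' : x ∈ closure (intrinsicInterior ℝ K) := by rw [hclK]; exact hxK
      have hcont : IsClosed {z : E | ⟪z, y⟫ ≤ 0} :=
        isClosed_le (continuous_id.inner continuous_const) continuous_const
      exact closure_minimal (fun z hz => hy z hz) hcont hx'
  have hpart1 : intrinsicInterior ℝ B = intrinsicInterior ℝ (polarCone K) := by
    rw [hKB, (aux_package hBconv ⟨0, hB0⟩).1]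
  refine ⟨hpart1, ?_, hBK, hpart4, hKB⟩
  rw [← hpart1]
  exact intrinsicInterior_subset
end

section
/- Let Q ⊆ E' be a nonempty closed convex cone, G : E → E' an affine map with G⁻¹(Q) nonempty, L_G : E → E' the linear map L_G(x) = G(0) − G(x), and L_G* its adjoint. If any of the following holds: (1) G⁻¹(relint Q) ≠ ∅; (2) L_G⁻¹(relint Q) ≠ ∅; (3) ker(L_G*) ∩ relint(Q*) ≠ ∅; (4) every x ∈ Q ∩ range(L_G) lies in the lineality space Q ∩ (−Q); (5) every x ∈ Q* ∩ ker(L_G*) is orthogonal to the linear span of Q; then the barrier cone of G⁻¹(Q) equals L_G*(Q*): {c ∈ E : {⟨c,x⟩ : x ∈ G⁻¹(Q)} is bounded above} = L_G*(Q*). -/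
open RealInnerProductSpace Set Pointwise

variable {E E' : Type*}
  [NormedAddCommGroup E] [InnerProductSpace ℝ E] [FiniteDimensional ℝ E]
  [NormedAddCommGroup E'] [InnerProductSpace ℝ E'] [FiniteDimensional ℝ E']

/-! ### Auxiliary lemmas -/

section Aux

variable {F F' : Type*}
  [NormedAddCommGroup F] [InnerProductSpace ℝ F]
  [NormedAddCommGroup F'] [InnerProductSpace ℝ F']

lemma IsClosedConvexCone.add_mem' {Q : Set F} (hQ : IsClosedConvexCone Q)
    {x y : F} (hx : x ∈ Q) (hy : y ∈ Q) : x + y ∈ Q := by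
  have h := hQ.convex hx hy (by norm_num : (0:ℝ) ≤ 1/2) (by norm_num : (0:ℝ) ≤ 1/2)
    (by norm_num)
  have h2 := hQ.smul_mem h (by norm_num : (0:ℝ) ≤ 2)
  have h3 : (2:ℝ) • ((1/2 : ℝ) • x + (1/2 : ℝ) • y) = x + y := by
    rw [smul_add, smul_smul, smul_smul]; norm_num
  rwa [h3] at h2

lemma isClosedConvexCone_dualCone (S : Set F) : IsClosedConvexCone (dualCone S) := by
  constructor
  · have h : dualCone S = ⋂ x ∈ S, {y : F | 0 ≤ ⟪x, y⟫} := by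
      ext y; simp [dualCone]
    rw [h]
    exact isClosed_biInter fun x _ =>
      isClosed_le continuous_const (continuous_const.inner continuous_id)
  · intro y₁ hy₁ y₂ hy₂ a b ha hb _
    intro x hx
    rw [inner_add_right, real_inner_smul_right, real_inner_smul_right]
    have h1 := hy₁ x hx
    have h2 := hy₂ x hx
    positivity
  · intro y hy t ht x hx
    rw [real_inner_smul_right]
    exact mul_nonneg ht (hy x hx)
  · intro x _
    rw [inner_zero_right]

/-- Package a closed convex cone as a `ConvexCone`. -/
def IsClosedConvexCone.toConvexCone {Q : Set F} (hQ : IsClosedConvexCone Q) : ConvexCone ℝ F where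
  carrier := Q
  smul_mem' := fun _ ht _ hx => hQ.smul_mem hx (le_of_lt ht)
  add_mem' := fun _ hx _ hy => hQ.add_mem' hx hy

lemma dualCone_dualCone {Q : Set F} [CompleteSpace F] (hQ : IsClosedConvexCone Q) :
    dualCone (dualCone Q) = Q := by
  let C : ProperCone ℝ F :=
    { carrier := Q
      add_mem' := fun hx hy => hQ.add_mem' hx hy
      zero_mem' := hQ.zero_mem
      smul_mem' := fun c _ hx => hQ.smul_mem hx c.2
      isClosed' := hQ.closed }
  have h := congrArg (fun K : ProperCone ℝ F => (K : Set F)) (ProperCone.innerDual_innerDual C)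
  exact h

lemma cone_separation {Q : Set F} [CompleteSpace F] (hQ : IsClosedConvexCone Q) {c : F}
    (hc : c ∉ Q) : ∃ u : F, (∀ x ∈ Q, 0 ≤ ⟪x, u⟫) ∧ ⟪u, c⟫ < 0 := by
  let C : ProperCone ℝ F :=
    { carrier := Q
      add_mem' := fun hx hy => hQ.add_mem' hx hy
      zero_mem' := hQ.zero_mem
      smul_mem' := fun c _ hx => hQ.smul_mem hx c.2
      isClosed' := hQ.closed }
  have h := ProperCone.hyperplane_separation' C hc
  obtain ⟨y, h1, h2⟩ := h
  exact ⟨y, fun x hx => h1 x hx, by rwa [real_inner_comm] at h2⟩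

lemma isClosedConvexCone_closure {S : Set F} (h0 : (0:F) ∈ S) (hconv : Convex ℝ S)
    (hsmul : ∀ ⦃x⦄, x ∈ S → ∀ ⦃t : ℝ⦄, 0 ≤ t → t • x ∈ S) :
    IsClosedConvexCone (closure S) where
  closed := isClosed_closure
  convex := hconv.closure
  smul_mem := fun x hx t ht => by
    have hcont : Continuous fun z : F => t • z := continuous_const.smul continuous_id
    exact map_mem_closure hcont hx (fun z hz => hsmul hz ht)
  zero_mem := subset_closure h0

lemma dualCone_closure (S : Set F) : dualCone (closure S) = dualCone S := by
  ext y
  constructor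
  · intro h x hx; exact h x (subset_closure hx)
  · intro h x hx
    have hc : IsClosed {z : F | 0 ≤ ⟪z, y⟫} :=
      isClosed_le continuous_const (continuous_id.inner continuous_const)
    exact hc.closure_subset_iff.mpr (fun z hz => h z hz) hx

lemma dualCone_dualCone_eq_closure {S : Set F} [CompleteSpace F] (h0 : (0:F) ∈ S)
    (hconv : Convex ℝ S)
    (hsmul : ∀ ⦃x⦄, x ∈ S → ∀ ⦃t : ℝ⦄, 0 ≤ t → t • x ∈ S) :
    dualCone (dualCone S) = closure S := by
  rw [← dualCone_closure S]
  exact dualCone_dualCone (isClosedConvexCone_closure h0 hconv hsmul)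

lemma dualCone_submodule (U : Submodule ℝ F) : dualCone (U : Set F) = (Uᗮ : Set F) := by
  ext y
  constructor
  · intro h
    rw [SetLike.mem_coe, Submodule.mem_orthogonal]
    intro u hu
    have h1 := h u hu
    have h2 := h (-u) (U.neg_mem hu)
    rw [inner_neg_left] at h2
    linarith
  · intro h u hu
    rw [SetLike.mem_coe, Submodule.mem_orthogonal] at h
    rw [h u hu]

lemma intrinsicInterior_shift {s : Set F} {x z : F}
    (hx : x ∈ intrinsicInterior ℝ s) (hz : x + z ∈ affineSpan ℝ s) :
    ∃ ε : ℝ, 0 < ε ∧ x + ε • z ∈ s := by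
  obtain ⟨p, hp, hpx⟩ := mem_intrinsicInterior.1 hx
  have hxA : x ∈ affineSpan ℝ s := by rw [← hpx]; exact p.2
  have hzdir : z ∈ (affineSpan ℝ s).direction := by
    have h := AffineSubspace.vsub_mem_direction hz hxA
    simpa using h
  have hmem : ∀ t : ℝ, x + t • z ∈ affineSpan ℝ s := by
    intro t
    have h := AffineSubspace.vadd_mem_of_mem_direction
      (Submodule.smul_mem _ t hzdir) hxA
    simpa [add_comm] using h
  set f : ℝ → affineSpan ℝ s := fun t => ⟨x + t • z, hmem t⟩ with hf
  have hfc : Continuous f :=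
    Continuous.subtype_mk (continuous_const.add (continuous_id.smul continuous_const)) _
  have h0 : f 0 = p := Subtype.ext (by simp [hf, hpx])
  have hnhds : f ⁻¹' interior ((↑) ⁻¹' s : Set (affineSpan ℝ s)) ∈ nhds (0:ℝ) :=
    hfc.continuousAt.preimage_mem_nhds (isOpen_interior.mem_nhds (by rw [h0]; exact hp))
  obtain ⟨δ, hδ, hball⟩ := Metric.mem_nhds_iff.1 hnhds
  refine ⟨δ/2, by positivity, ?_⟩
  have hb : (δ/2 : ℝ) ∈ Metric.ball (0:ℝ) δ := by
    rw [Metric.mem_ball, Real.dist_eq, sub_zero, abs_of_pos (by positivity)]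
    linarith
  have h9 := interior_subset (hball hb)
  exact h9

lemma intrinsicInterior_shift_span {Q : Set F} (h0Q : (0:F) ∈ Q) {x z : F}
    (hx : x ∈ intrinsicInterior ℝ Q) (hz : z ∈ Submodule.span ℝ Q) :
    ∃ ε : ℝ, 0 < ε ∧ x + ε • z ∈ Q := by
  apply intrinsicInterior_shift hx
  have hdir : Submodule.span ℝ Q ≤ (affineSpan ℝ Q).direction := by
    rw [Submodule.span_le]
    intro q hq
    have h := AffineSubspace.vsub_mem_direction (subset_affineSpan ℝ Q hq)
      (subset_affineSpan ℝ Q h0Q)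
    simpa using h
  have hxA : x ∈ affineSpan ℝ Q := subset_affineSpan ℝ Q (intrinsicInterior_subset hx)
  have h := AffineSubspace.vadd_mem_of_mem_direction (hdir hz) hxA
  simpa [add_comm] using h

lemma inner_eq_zero_of_mem_ri {Q : Set F} {y qb : F}
    (hy : y ∈ dualCone Q) (hq : qb ∈ intrinsicInterior ℝ Q) (h0 : ⟪qb, y⟫ = 0)
    {q : F} (hqQ : q ∈ Q) : ⟪q, y⟫ = 0 := by
  have hmem : qb + (qb - q) ∈ affineSpan ℝ Q := by
    have h1 : qb ∈ affineSpan ℝ Q := subset_affineSpan ℝ Q (intrinsicInterior_subset hq)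
    have h2 : q ∈ affineSpan ℝ Q := subset_affineSpan ℝ Q hqQ
    have h3 := AffineSubspace.vsub_mem_direction h1 h2
    have h4 := AffineSubspace.vadd_mem_of_mem_direction h3 h1
    simpa [add_comm, sub_eq_add_neg] using h4
  obtain ⟨ε, hε, hQmem⟩ := intrinsicInterior_shift hq hmem
  have h1 := hy _ hQmem
  have h2 := hy _ hqQ
  rw [inner_add_left, real_inner_smul_left, inner_sub_left, h0] at h1
  nlinarith

end Aux

section AuxFinDim

variable {F F' : Type*}
  [NormedAddCommGroup F] [InnerProductSpace ℝ F] [FiniteDimensional ℝ F]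
  [NormedAddCommGroup F'] [InnerProductSpace ℝ F'] [FiniteDimensional ℝ F']

/-- If every dual element killed by the adjoint is orthogonal to the cone, then the image of
the dual cone under the adjoint is closed. -/
lemma isClosed_adjoint_image {P : Set F'} (B : F →ₗ[ℝ] F')
    (hcond : ∀ y ∈ dualCone P, LinearMap.adjoint B y = 0 → ∀ p ∈ P, ⟪p, y⟫ = 0) :
    IsClosed (⇑(LinearMap.adjoint B) '' dualCone P) := by
  classical
  set B' := LinearMap.adjoint B with hB'
  have hDd : IsClosedConvexCone (dualCone P) := isClosedConvexCone_dualCone P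
  set N : Submodule ℝ F' := (Submodule.span ℝ P)ᗮ ⊓ LinearMap.ker B' with hN
  have hsubN : ∀ y ∈ dualCone P, B' y = 0 → y ∈ N := by
    intro y hy h0
    refine Submodule.mem_inf.2 ⟨?_, h0⟩
    rw [Submodule.mem_orthogonal]
    intro u hu
    induction hu using Submodule.span_induction with
    | mem u hu => exact hcond y hy h0 u hu
    | zero => rw [inner_zero_left]
    | add u v _ _ h1 h2 => rw [inner_add_left, h1, h2, add_zero]
    | smul t u _ h1 => rw [real_inner_smul_left, h1, mul_zero]
  have hNP : ∀ n ∈ N, ∀ p ∈ P, ⟪p, n⟫ = 0 := by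
    intro n hn p hp
    have h1 := (Submodule.mem_inf.1 hn).1
    rw [Submodule.mem_orthogonal] at h1
    exact h1 p (Submodule.subset_span hp)
  have hNadd : ∀ y ∈ dualCone P, ∀ n ∈ N, y + n ∈ dualCone P := by
    intro y hy n hn p hp
    rw [inner_add_right, hNP n hn p hp, add_zero]
    exact hy p hp
  have hNker : ∀ n ∈ N, B' n = 0 := fun n hn => (Submodule.mem_inf.1 hn).2
  have hseq : IsSeqClosed (⇑B' '' dualCone P) := by
    intro f x hf hx
    choose y hyD hyB using hf
    set z : ℕ → F' := fun n => y n - (Submodule.orthogonalProjectionOnto N (y n) : F') with hz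
    have hzD : ∀ n, z n ∈ dualCone P := by
      intro n
      have h := hNadd (y n) (hyD n) (-(Submodule.orthogonalProjectionOnto N (y n) : F'))
        (N.neg_mem (Submodule.coe_mem _))
      simpa [hz, sub_eq_add_neg] using h
    have hzB : ∀ n, B' (z n) = f n := by
      intro n
      rw [hz]
      simp only [map_sub]
      rw [hNker _ (Submodule.coe_mem _), sub_zero]
      exact hyB n
    have hzO : ∀ n, z n ∈ Nᗮ := fun n => by
      have h := N.sub_starProjection_mem_orthogonal (y n)
      rwa [Submodule.starProjection_apply] at h
    have hBcont : Continuous B' := B'.continuous_of_finiteDimensional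
    by_cases hbdd : ∃ M, ∀ n, ‖z n‖ ≤ M
    · obtain ⟨M, hM⟩ := hbdd
      have hball : ∀ n, z n ∈ Metric.closedBall (0:F') M := by
        intro n; rw [Metric.mem_closedBall, dist_zero_right]; exact hM n
      obtain ⟨a, _, φ, hφ, hφt⟩ := (isCompact_closedBall (0:F') M).tendsto_subseq hball
      have haD : a ∈ dualCone P :=
        hDd.closed.mem_of_tendsto hφt (Filter.Eventually.of_forall fun n => hzD (φ n))
      have h1 : Filter.Tendsto (fun n => B' (z (φ n))) Filter.atTop (nhds (B' a)) :=
        (hBcont.tendsto a).comp hφt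
      have h2 : Filter.Tendsto (fun n => B' (z (φ n))) Filter.atTop (nhds x) := by
        have h3 := hx.comp hφ.tendsto_atTop
        simpa [Function.comp_def, hzB] using h3
      exact ⟨a, haD, tendsto_nhds_unique h1 h2⟩
    · exfalso
      push_neg at hbdd
      have hsel : ∀ m : ℕ, ∃ n, (m:ℝ) < ‖z n‖ := fun m => hbdd m
      choose ψ hψ using hsel
      have hzpos : ∀ m, 0 < ‖z (ψ m)‖ := fun m => lt_of_le_of_lt (Nat.cast_nonneg m) (hψ m)
      set w : ℕ → F' := fun m => ‖z (ψ m)‖⁻¹ • z (ψ m) with hw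
      have hws : ∀ m, w m ∈ Metric.sphere (0:F') 1 := by
        intro m
        rw [mem_sphere_zero_iff_norm, hw]
        rw [norm_smul, norm_inv, norm_norm, inv_mul_cancel₀ (hzpos m).ne']
      obtain ⟨u, hu, φ, hφ, hφt⟩ := (isCompact_sphere (0:F') 1).tendsto_subseq hws
      have huD : u ∈ dualCone P :=
        hDd.closed.mem_of_tendsto hφt (Filter.Eventually.of_forall fun m =>
          hDd.smul_mem (hzD _) (inv_nonneg.2 (norm_nonneg _)))
      have huO : u ∈ Nᗮ := by
        have hcl : IsClosed ((Nᗮ : Submodule ℝ F') : Set F') :=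
          Submodule.closed_of_finiteDimensional _
        exact hcl.mem_of_tendsto hφt (Filter.Eventually.of_forall fun m =>
          Submodule.smul_mem _ _ (hzO _))
      obtain ⟨C, hC⟩ := hx.norm.bddAbove_range
      have hCle : ∀ n, ‖f n‖ ≤ C := fun n => hC ⟨n, rfl⟩
      have hnorm : ∀ m, ‖B' (w (φ m))‖ ≤ C * ‖z (ψ (φ m))‖⁻¹ := by
        intro m
        rw [hw]
        simp only [map_smul, norm_smul, norm_inv, norm_norm, hzB]
        rw [mul_comm]
        exact mul_le_mul_of_nonneg_right (hCle _) (inv_nonneg.2 (norm_nonneg _))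
      have hmono : ∀ m : ℕ, (m:ℝ) ≤ ‖z (ψ (φ m))‖ := by
        intro m
        calc (m:ℝ) ≤ (φ m : ℝ) := Nat.cast_le.2 hφ.le_apply
        _ ≤ ‖z (ψ (φ m))‖ := (hψ (φ m)).le
      have hinf : Filter.Tendsto (fun m => ‖z (ψ (φ m))‖) Filter.atTop Filter.atTop :=
        Filter.tendsto_atTop_mono hmono tendsto_natCast_atTop_atTop
      have hinv : Filter.Tendsto (fun m => ‖z (ψ (φ m))‖⁻¹) Filter.atTop (nhds 0) :=
        hinf.inv_tendsto_atTop
      have hB0 : Filter.Tendsto (fun m => B' (w (φ m))) Filter.atTop (nhds 0) := by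
        apply squeeze_zero_norm hnorm
        have h4 := hinv.const_mul C
        simpa using h4
      have hBu : B' u = 0 := by
        have h1 : Filter.Tendsto (fun m => B' (w (φ m))) Filter.atTop (nhds (B' u)) :=
          (hBcont.tendsto u).comp hφt
        exact tendsto_nhds_unique h1 hB0
      have huN : u ∈ N := hsubN u huD hBu
      have huu : ⟪u, u⟫ = 0 := (Submodule.mem_orthogonal N u).1 huO u huN
      have hu0 : u = 0 := inner_self_eq_zero.1 huu
      have h1 : ‖u‖ = 1 := mem_sphere_zero_iff_norm.1 hu
      rw [hu0, norm_zero] at h1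
      exact zero_ne_one h1
  exact hseq.isClosed

/-- Farkas-type lemma: anything in the dual of `B⁻¹(P)` is in the closure of `B*(P*)`. -/
lemma mem_closure_adjoint_image {P : Set F'} (hP : IsClosedConvexCone P) (B : F →ₗ[ℝ] F')
    {w : F} (hw : ∀ k : F, B k ∈ P → 0 ≤ ⟪k, w⟫) :
    w ∈ closure (⇑(LinearMap.adjoint B) '' dualCone P) := by
  by_contra hc
  have hD := isClosedConvexCone_dualCone P
  have hCC : IsClosedConvexCone (closure (⇑(LinearMap.adjoint B) '' dualCone P)) := by
    apply isClosedConvexCone_closure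
    · exact ⟨0, hD.zero_mem, map_zero _⟩
    · exact hD.convex.linear_image (LinearMap.adjoint B)
    · rintro _ ⟨v, hv, rfl⟩ t ht
      exact ⟨t • v, hD.smul_mem hv ht, map_smul _ _ _⟩
  obtain ⟨u, hu1, hu2⟩ := cone_separation hCC hc
  have hBu : B u ∈ P := by
    rw [← dualCone_dualCone hP]
    intro y hy
    have h := hu1 (LinearMap.adjoint B y) (subset_closure ⟨y, hy, rfl⟩)
    rwa [LinearMap.adjoint_inner_left] at h
  have h := hw u hBu
  linarith


/-- A convex cone whose closure is a subspace is equal to that subspace. -/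
lemma cone_eq_subspace_of_closure {C : Set F}
    (hconv : Convex ℝ C) (h0 : (0:F) ∈ C)
    (hadd : ∀ x ∈ C, ∀ y ∈ C, x + y ∈ C)
    (hsmul : ∀ x ∈ C, ∀ t : ℝ, 0 ≤ t → t • x ∈ C)
    (W : Submodule ℝ F) (hcl : closure C = (W : Set F)) : C = (W : Set F) := by
  classical
  have hCW : C ⊆ (W : Set F) := hcl ▸ subset_closure
  have hspan : Submodule.span ℝ C = W := by
    apply le_antisymm
    · rw [Submodule.span_le]; exact hCW
    · intro w hw
      have h1 : w ∈ closure C := by rw [hcl]; exact hw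
      have h2 : closure C ⊆ closure ((Submodule.span ℝ C : Submodule ℝ F) : Set F) :=
        closure_mono (Submodule.subset_span)
      have h3 : IsClosed ((Submodule.span ℝ C : Submodule ℝ F) : Set F) :=
        Submodule.closed_of_finiteDimensional _
      have h4 := h2 h1
      rwa [h3.closure_eq] at h4
  -- find a finite subset of C spanning W
  obtain ⟨G, hG⟩ : (Submodule.span ℝ C).FG := IsNoetherian.noetherian _
  have hGsub : ∀ g ∈ (G : Set F), ∃ tg : Finset F, (tg : Set F) ⊆ C ∧ g ∈ Submodule.span ℝ (tg : Set F) := by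
    intro g hg
    have : g ∈ Submodule.span ℝ C := by rw [← hG]; exact Submodule.subset_span hg
    exact Submodule.mem_span_finite_of_mem_span this
  choose tg htg1 htg3 using hGsub
  set T : Set F := ⋃ (g : F) (hg : g ∈ (G : Set F)), (tg g hg : Set F) with hT
  have hTC : T ⊆ C := by
    intro x hx
    simp only [hT, mem_iUnion] at hx
    obtain ⟨g, hg, hx⟩ := hx
    exact htg1 g hg hx
  have hTfin : T.Finite :=
    Set.Finite.biUnion' (Finset.finite_toSet G) (fun g hg => (tg g hg).finite_toSet)
  have hTspan : Submodule.span ℝ T = W := by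
    apply le_antisymm
    · rw [← hspan, Submodule.span_le]
      exact fun x hx => Submodule.subset_span (hTC hx)
    · rw [← hspan, ← hG, Submodule.span_le]
      intro g hg
      have h5 := htg3 g hg
      have h6 : Submodule.span ℝ (tg g hg) ≤ Submodule.span ℝ T :=
        Submodule.span_mono (subset_iUnion₂ (s := fun g hg => ((tg g hg : Set F))) g hg)
      exact h6 h5
  haveI : Fintype T := hTfin.fintype
  set v : T → F := fun i => (i : F) with hv
  set Tlin : (T → ℝ) →ₗ[ℝ] F := Fintype.linearCombination ℝ v with hTlin
  have hrange : LinearMap.range Tlin = W := by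
    rw [hTlin, Fintype.range_linearCombination, hv]
    rw [Subtype.range_coe_subtype, Set.setOf_mem_eq]
    exact hTspan
  -- restrict to W and get a right inverse
  have hmemW : ∀ a : T → ℝ, Tlin a ∈ W := fun a => by
    rw [← hrange]; exact LinearMap.mem_range_self _ _
  set Tres : (T → ℝ) →ₗ[ℝ] W := Tlin.codRestrict W hmemW with hTres
  have hsurj : LinearMap.range Tres = ⊤ := by
    rw [LinearMap.range_eq_top]
    intro wel
    obtain ⟨a, ha⟩ : ∃ a, Tlin a = (wel : F) := by
      rw [← LinearMap.mem_range, hrange]; exact wel.2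
    exact ⟨a, Subtype.ext ha⟩
  obtain ⟨σ, hσ⟩ := Tres.exists_rightInverse_of_surjective hsurj
  have hσapp : ∀ wel : W, Tlin (σ wel) = (wel : F) := by
    intro wel
    have := congrArg (fun f => (f wel : F)) hσ
    simpa [Tres, LinearMap.codRestrict] using this
  -- continuity bound
  have hσcont : Continuous σ := σ.continuous_of_finiteDimensional
  obtain ⟨δ, hδpos, hδ⟩ : ∃ δ > 0, ∀ wel : W, ‖(wel : F)‖ < δ → ‖σ wel‖ < 1 := by
    have h1 : ContinuousAt σ 0 := hσcont.continuousAt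
    rw [Metric.continuousAt_iff] at h1
    obtain ⟨δ, hδpos, hδ⟩ := h1 1 one_pos
    refine ⟨δ, hδpos, fun wel hw => ?_⟩
    have h2 : dist wel 0 < δ := by
      rw [dist_zero_right]
      exact hw
    have h3 := hδ h2
    rwa [map_zero, dist_zero_right] at h3
  -- sum of elements of C is in C
  have hsum : ∀ (s : Finset T) (f : T → F), (∀ i, f i ∈ C) → ∑ i ∈ s, f i ∈ C := by
    intro s
    induction s using Finset.induction with
    | empty => intro f _; simpa using h0
    | @insert _ _ hnot ih =>
      intro f hf
      rw [Finset.sum_insert hnot]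
      exact hadd _ (hf _) _ (ih f hf)
  set c₀ : F := Tlin (fun _ => 1) with hc₀
  have hc₀C : c₀ ∈ C := by
    rw [hc₀, Fintype.linearCombination_apply]
    exact hsum _ _ (fun i => by simpa using hTC i.2)
  -- interior-type step
  have hkey : ∀ z : F, z ∈ W → ‖z‖ < δ → c₀ + z ∈ C := by
    intro z hzW hznorm
    set zel : W := ⟨z, hzW⟩ with hzel
    have h1 : ‖σ zel‖ < 1 := hδ zel hznorm
    set a : T → ℝ := σ zel with ha
    have h2 : ∀ i : T, |a i| < 1 := by
      intro i
      calc |a i| = ‖a i‖ := (Real.norm_eq_abs _).symm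
      _ ≤ ‖a‖ := norm_le_pi_norm a i
      _ < 1 := h1
    have h3 : Tlin a = z := hσapp zel
    have h4 : c₀ + z = ∑ i : T, (1 + a i) • v i := by
      rw [← h3, hc₀, Fintype.linearCombination_apply, Fintype.linearCombination_apply]
      rw [← Finset.sum_add_distrib]
      congr 1; ext i
      rw [add_smul, one_smul]
    rw [h4]
    apply hsum
    intro i
    apply hsmul _ (hTC i.2)
    have := (abs_lt.1 (h2 i)).1
    linarith
  -- conclude
  apply Subset.antisymm hCW
  intro x hx
  have hyW : (2:ℝ) • x - c₀ ∈ W := W.sub_mem (W.smul_mem _ hx) (hCW hc₀C)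
  have hycl : (2:ℝ) • x - c₀ ∈ closure C := by rw [hcl]; exact hyW
  obtain ⟨cc, hccC, hcc⟩ : ∃ cc ∈ C, dist ((2:ℝ) • x - c₀) cc < δ := by
    rw [Metric.mem_closure_iff] at hycl
    obtain ⟨cc, h1, h2⟩ := hycl δ hδpos
    exact ⟨cc, h1, h2⟩
  set z : F := (2:ℝ) • x - c₀ - cc with hzdef
  have hzW : z ∈ W := W.sub_mem hyW (hCW hccC)
  have hznorm : ‖z‖ < δ := by
    rw [hzdef, ← dist_eq_norm]
    exact hcc
  have h5 : c₀ + z ∈ C := hkey z hzW hznorm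
  have h6 : x = (1/2 : ℝ) • (c₀ + z) + (1/2 : ℝ) • cc := by
    rw [hzdef]
    module
  rw [h6]
  exact hconv h5 hccC (by norm_num) (by norm_num) (by norm_num)


/-- Under the lineality condition (4), the image of the dual cone under the adjoint is closed. -/
lemma isClosed_adjoint_image_of_lineality {Q : Set F'} (hQ : IsClosedConvexCone Q)
    (A : F →ₗ[ℝ] F')
    (h4 : ∀ x ∈ Q ∩ Set.range ⇑A, x ∈ Q ∩ -Q) :
    IsClosed (⇑(LinearMap.adjoint A) '' dualCone Q) := by
  classical
  set A' := LinearMap.adjoint A with hA'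
  set V : Submodule ℝ F' := LinearMap.range A with hV
  have hD := isClosedConvexCone_dualCone Q
  set U : Submodule ℝ F' :=
    { carrier := Q ∩ -Q ∩ (V : Set F')
      add_mem' := by
        rintro x y ⟨⟨hx1, hx2⟩, hx3⟩ ⟨⟨hy1, hy2⟩, hy3⟩
        refine ⟨⟨hQ.add_mem' hx1 hy1, ?_⟩, V.add_mem hx3 hy3⟩
        rw [Set.mem_neg] at hx2 hy2 ⊢
        rw [neg_add]
        exact hQ.add_mem' hx2 hy2
      zero_mem' := ⟨⟨hQ.zero_mem, by rw [Set.mem_neg, neg_zero]; exact hQ.zero_mem⟩,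
        V.zero_mem⟩
      smul_mem' := by
        intro c x hx
        obtain ⟨⟨hx1, hx2⟩, hx3⟩ := hx
        rw [Set.mem_neg] at hx2
        rcases le_total 0 c with hc | hc
        · refine ⟨⟨hQ.smul_mem hx1 hc, ?_⟩, V.smul_mem c hx3⟩
          rw [Set.mem_neg, ← smul_neg]
          exact hQ.smul_mem hx2 hc
        · have hc' : 0 ≤ -c := neg_nonneg.2 hc
          refine ⟨⟨?_, ?_⟩, V.smul_mem c hx3⟩
          · have h := hQ.smul_mem hx2 hc'
            rwa [neg_smul, smul_neg, neg_neg] at h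
          · rw [Set.mem_neg, ← neg_smul]
            exact hQ.smul_mem hx1 hc' } with hU
  set S : Set F' := dualCone Q + ((Vᗮ : Submodule ℝ F') : Set F') with hS
  have hmemS : ∀ x, x ∈ S ↔ ∃ w ∈ dualCone Q, ∃ v ∈ (Vᗮ : Submodule ℝ F'), w + v = x :=
    fun x => Set.mem_add
  have hS0 : (0:F') ∈ S :=
    (hmemS 0).2 ⟨0, hD.zero_mem, 0, Submodule.zero_mem _, add_zero 0⟩
  have hSconv : Convex ℝ S := hD.convex.add (Vᗮ : Submodule ℝ F').convex
  have hSadd : ∀ x ∈ S, ∀ y ∈ S, x + y ∈ S := by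
    intro x hx y hy
    obtain ⟨w1, hw1, v1, hv1, rfl⟩ := (hmemS x).1 hx
    obtain ⟨w2, hw2, v2, hv2, rfl⟩ := (hmemS y).1 hy
    exact (hmemS _).2 ⟨w1 + w2, hD.add_mem' hw1 hw2, v1 + v2,
      Submodule.add_mem _ hv1 hv2, by abel⟩
  have hSsmul : ∀ x ∈ S, ∀ t : ℝ, 0 ≤ t → t • x ∈ S := by
    intro x hx t ht
    obtain ⟨w, hw, v, hv, rfl⟩ := (hmemS x).1 hx
    exact (hmemS _).2 ⟨t • w, hD.smul_mem hw ht, t • v, Submodule.smul_mem _ _ hv,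
      (smul_add t w v).symm⟩
  have hVorth_ker : ∀ v ∈ (Vᗮ : Submodule ℝ F'), A' v = 0 := by
    intro v hv
    have h1 : ⟪A' v, A' v⟫ = 0 := by
      rw [hA', LinearMap.adjoint_inner_left]
      have h2 := (Submodule.mem_orthogonal V v).1 hv (A (LinearMap.adjoint A v))
        (LinearMap.mem_range_self _ _)
      rwa [real_inner_comm] at h2
    exact inner_self_eq_zero.1 h1
  have hQV : Q ∩ (V : Set F') = (U : Set F') := by
    ext x
    constructor
    · rintro ⟨h1, h2⟩
      exact ⟨⟨h1, (h4 x ⟨h1, h2⟩).2⟩, h2⟩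
    · rintro ⟨⟨h1, _⟩, h3⟩
      exact ⟨h1, h3⟩
  have hdualS : dualCone S = Q ∩ (V : Set F') := by
    ext y
    constructor
    · intro h
      constructor
      · rw [← dualCone_dualCone hQ]
        intro w hw
        exact h w ((hmemS w).2 ⟨w, hw, 0, Submodule.zero_mem _, add_zero w⟩)
      · have horth : y ∈ (Vᗮᗮ : Submodule ℝ F') := by
          rw [Submodule.mem_orthogonal]
          intro v hv
          have ha := h v ((hmemS v).2 ⟨0, hD.zero_mem, v, hv, zero_add v⟩)
          have hb := h (-v) ((hmemS (-v)).2
            ⟨0, hD.zero_mem, -v, Submodule.neg_mem _ hv, zero_add _⟩)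
          rw [inner_neg_left] at hb
          linarith
        rwa [Submodule.orthogonal_orthogonal] at horth
    · rintro ⟨hyQ, hyV⟩ x hx
      obtain ⟨w, hw, v, hv, rfl⟩ := (hmemS x).1 hx
      rw [inner_add_left]
      have h1 : 0 ≤ ⟪w, y⟫ := by
        have h := hw y hyQ
        rwa [real_inner_comm] at h
      have h2 : ⟪v, y⟫ = 0 := by
        have h := (Submodule.mem_orthogonal V v).1 hv y hyV
        rwa [real_inner_comm] at h
      linarith
  have hclS : closure S = ((Uᗮ : Submodule ℝ F') : Set F') := by
    rw [← dualCone_dualCone_eq_closure hS0 hSconv (fun x hx t ht => hSsmul x hx t ht),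
      hdualS, hQV, dualCone_submodule]
  have hSeq : S = ((Uᗮ : Submodule ℝ F') : Set F') :=
    cone_eq_subspace_of_closure hSconv hS0 hSadd hSsmul Uᗮ hclS
  have himg : ⇑A' '' dualCone Q = ⇑A' '' S := by
    apply Subset.antisymm
    · rintro _ ⟨w, hw, rfl⟩
      exact ⟨w, (hmemS w).2 ⟨w, hw, 0, Submodule.zero_mem _, add_zero w⟩, rfl⟩
    · rintro _ ⟨x, hx, rfl⟩
      obtain ⟨w, hw, v, hv, rfl⟩ := (hmemS x).1 hx
      exact ⟨w, hw, by rw [map_add, hVorth_ker v hv, add_zero]⟩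
  rw [himg, hSeq]
  have hfin : ⇑A' '' ((Uᗮ : Submodule ℝ F') : Set F') = ((Uᗮ.map A' : Submodule ℝ F) : Set F) := by
    rw [Submodule.map_coe]
  rw [hfin]
  exact Submodule.closed_of_finiteDimensional _


/-- Under the Slater condition (1), a bounded linear objective is in the adjoint image. -/
lemma mem_adjoint_image_of_slater {Q : Set F'} (hQ : IsClosedConvexCone Q)
    (A : F →ₗ[ℝ] F') (b : F') {xbar : F} (hslater : b - A xbar ∈ intrinsicInterior ℝ Q)
    {c : F} {μ : ℝ}
    (hub : ∀ x : F, b - A x ∈ Q → ⟪c, x⟫ ≤ μ)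
    (hrec : ∀ d : F, -(A d) ∈ Q → ⟪c, d⟫ ≤ 0) :
    c ∈ ⇑(LinearMap.adjoint A) '' dualCone Q := by
  classical
  let e₁ : WithLp 2 (F × ℝ) ≃ₗ[ℝ] F × ℝ := WithLp.linearEquiv 2 ℝ (F × ℝ)
  let e₂ : WithLp 2 (F' × ℝ) ≃ₗ[ℝ] F' × ℝ := WithLp.linearEquiv 2 ℝ (F' × ℝ)
  let B₀ : (F × ℝ) →ₗ[ℝ] (F' × ℝ) :=
    LinearMap.prod ((LinearMap.snd ℝ F ℝ).smulRight b - A.comp (LinearMap.fst ℝ F ℝ))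
      (LinearMap.snd ℝ F ℝ)
  let B : WithLp 2 (F × ℝ) →ₗ[ℝ] WithLp 2 (F' × ℝ) :=
    e₂.symm.toLinearMap ∘ₗ B₀ ∘ₗ e₁.toLinearMap
  have hBfst : ∀ k : WithLp 2 (F × ℝ), (B k).fst = k.snd • b - A k.fst := fun k => rfl
  have hBsnd : ∀ k : WithLp 2 (F × ℝ), (B k).snd = k.snd := fun k => rfl
  set P : Set (WithLp 2 (F' × ℝ)) := {w | w.fst ∈ Q ∧ 0 ≤ w.snd} with hPdef
  have hP : IsClosedConvexCone P := by
    constructor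
    · have hf : Continuous fun w : WithLp 2 (F' × ℝ) => w.fst :=
        ((LinearMap.fst ℝ F' ℝ).comp e₂.toLinearMap).continuous_of_finiteDimensional
      have hg : Continuous fun w : WithLp 2 (F' × ℝ) => w.snd :=
        ((LinearMap.snd ℝ F' ℝ).comp e₂.toLinearMap).continuous_of_finiteDimensional
      have h1 : IsClosed {w : WithLp 2 (F' × ℝ) | w.fst ∈ Q} := hQ.closed.preimage hf
      have h2 : IsClosed {w : WithLp 2 (F' × ℝ) | 0 ≤ w.snd} :=
        isClosed_le continuous_const hg
      exact h1.inter h2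
    · rintro w ⟨hw1, hw2⟩ w' ⟨hw1', hw2'⟩ a a' ha ha' haa
      constructor
      · have h := hQ.convex hw1 hw1' ha ha' haa
        exact h
      · have h9 : (a • w + a' • w').snd = a * w.snd + a' * w'.snd := rfl
        rw [h9]
        exact add_nonneg (mul_nonneg ha hw2) (mul_nonneg ha' hw2')
    · rintro w ⟨hw1, hw2⟩ t ht
      constructor
      · have h := hQ.smul_mem hw1 ht
        exact h
      · have h9 : (t • w).snd = t * w.snd := rfl
        rw [h9]
        exact mul_nonneg ht hw2
    · exact ⟨hQ.zero_mem, le_refl 0⟩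
  -- elements of the dual cone of P
  have hPdual : ∀ z ∈ dualCone P, z.fst ∈ dualCone Q ∧ 0 ≤ z.snd := by
    intro z hz
    constructor
    · intro q hq
      have hp : (e₂.symm (q, 0)) ∈ P := by
        constructor
        · show q ∈ Q; exact hq
        · show (0:ℝ) ≤ 0
          exact le_refl 0
      have h := hz _ hp
      rw [WithLp.prod_inner_apply] at h
      simp only [WithLp.ofLp_fst, WithLp.ofLp_snd] at h
      rw [show ((e₂.symm (q, 0) : WithLp 2 (F' × ℝ))).fst = q from rfl,
        show ((e₂.symm (q, 0) : WithLp 2 (F' × ℝ))).snd = (0:ℝ) from rfl] at h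
      simp only [RCLike.inner_apply, conj_trivial, zero_mul, mul_zero, add_zero] at h
      exact h
    · have hp : (e₂.symm (0, 1)) ∈ P := by
        constructor
        · show (0:F') ∈ Q; exact hQ.zero_mem
        · show (0:ℝ) ≤ 1; norm_num
      have h := hz _ hp
      rw [WithLp.prod_inner_apply] at h
      simp only [WithLp.ofLp_fst, WithLp.ofLp_snd] at h
      rw [show ((e₂.symm ((0:F'), (1:ℝ)) : WithLp 2 (F' × ℝ))).fst = (0:F') from rfl,
        show ((e₂.symm ((0:F'), (1:ℝ)) : WithLp 2 (F' × ℝ))).snd = (1:ℝ) from rfl] at h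
      simp only [inner_zero_left, RCLike.inner_apply, conj_trivial, one_mul, mul_one, zero_add] at h
      exact h
  -- the closedness condition for B and P
  have hcondB : ∀ z ∈ dualCone P, LinearMap.adjoint B z = 0 → ∀ p ∈ P, ⟪p, z⟫ = 0 := by
    intro z hz h0 p hp
    have hzero : ∀ k, ⟪z, B k⟫ = 0 := by
      intro k
      rw [← LinearMap.adjoint_inner_left B, h0, inner_zero_left]
    obtain ⟨hyD, hr⟩ := hPdual z hz
    have hky : LinearMap.adjoint A z.fst = 0 := by
      have hx : ∀ x : F, ⟪z.fst, A x⟫ = 0 := by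
        intro x
        have h := hzero (e₁.symm (x, 0))
        rw [WithLp.prod_inner_apply] at h
        simp only [WithLp.ofLp_fst, WithLp.ofLp_snd] at h
        simp only [hBfst, hBsnd] at h
        rw [show (e₁.symm (x, 0) : WithLp 2 (F × ℝ)).snd = (0:ℝ) from rfl,
          show (e₁.symm (x, 0) : WithLp 2 (F × ℝ)).fst = x from rfl] at h
        rw [zero_smul, zero_sub, inner_neg_right] at h
        simp only [RCLike.inner_apply, conj_trivial, mul_zero, add_zero] at h
        linarith
      have h1 : ⟪LinearMap.adjoint A z.fst, LinearMap.adjoint A z.fst⟫ = 0 := by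
        rw [LinearMap.adjoint_inner_left]
        exact hx _
      exact inner_self_eq_zero.1 h1
    have hbr : ⟪z.fst, b⟫ + z.snd = 0 := by
      have h := hzero (e₁.symm (0, 1))
      rw [WithLp.prod_inner_apply] at h
      simp only [WithLp.ofLp_fst, WithLp.ofLp_snd] at h
      simp only [hBfst, hBsnd] at h
      rw [show (e₁.symm ((0:F), (1:ℝ)) : WithLp 2 (F × ℝ)).snd = (1:ℝ) from rfl,
        show (e₁.symm ((0:F), (1:ℝ)) : WithLp 2 (F × ℝ)).fst = (0:F) from rfl] at h
      rw [one_smul, map_zero, sub_zero] at h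
      simp only [RCLike.inner_apply, conj_trivial, mul_one] at h
      linarith
    have h2 : ⟪A xbar, z.fst⟫ = 0 := by
      rw [← LinearMap.adjoint_inner_right, hky, inner_zero_right]
    have h1 : ⟪b - A xbar, z.fst⟫ = -z.snd := by
      rw [inner_sub_left, h2, sub_zero, real_inner_comm]
      linarith
    have h3 : 0 ≤ ⟪b - A xbar, z.fst⟫ := hyD _ (intrinsicInterior_subset hslater)
    have h4 : z.snd = 0 := by linarith
    have h5 : ⟪b - A xbar, z.fst⟫ = 0 := by rw [h1, h4, neg_zero]
    have hQorth : ∀ q ∈ Q, ⟪q, z.fst⟫ = 0 := fun q hq =>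
      inner_eq_zero_of_mem_ri hyD hslater h5 hq
    rw [WithLp.prod_inner_apply]
    simp only [WithLp.ofLp_fst, WithLp.ofLp_snd]
    rw [hQorth p.fst hp.1]
    simp [RCLike.inner_apply, h4]
  have hclosed := isClosed_adjoint_image B hcondB
  set wc : WithLp 2 (F × ℝ) := e₁.symm (-c, μ) with hwc
  have hwcfst : wc.fst = -c := rfl
  have hwcsnd : wc.snd = μ := rfl
  have hw : ∀ k, B k ∈ P → 0 ≤ ⟪k, wc⟫ := by
    intro k hk
    obtain ⟨hk1, hk2⟩ := hk
    rw [hBfst] at hk1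
    rw [hBsnd] at hk2
    rw [WithLp.prod_inner_apply]
    simp only [WithLp.ofLp_fst, WithLp.ofLp_snd]
    rw [hwcfst, hwcsnd]
    simp only [RCLike.inner_apply, conj_trivial]
    rw [inner_neg_right]
    have hcomm : ⟪k.fst, c⟫ = ⟪c, k.fst⟫ := real_inner_comm _ _
    rcases eq_or_lt_of_le hk2 with h0 | hpos
    · have hk1' : -(A k.fst) ∈ Q := by
        rw [← h0, zero_smul, zero_sub] at hk1
        exact hk1
      have h6 := hrec k.fst hk1'
      rw [← h0]
      rw [hcomm]
      linarith
    · have hfeas : b - A ((k.snd)⁻¹ • k.fst) ∈ Q := by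
        have h := hQ.smul_mem hk1 (le_of_lt (inv_pos.2 hpos))
        rw [smul_sub, smul_smul, inv_mul_cancel₀ hpos.ne', one_smul, ← map_smul] at h
        exact h
      have h6 := hub _ hfeas
      rw [real_inner_smul_right] at h6
      have h7 : ⟪c, k.fst⟫ ≤ k.snd * μ := by
        have h8 := mul_le_mul_of_nonneg_left h6 (le_of_lt hpos)
        rwa [← mul_assoc, mul_inv_cancel₀ hpos.ne', one_mul] at h8
      rw [hcomm]
      linarith
  have hmem := mem_closure_adjoint_image hP B hw
  rw [hclosed.closure_eq] at hmem
  obtain ⟨z, hzD, hzeq⟩ := hmem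
  obtain ⟨hyD, -⟩ := hPdual z hzD
  refine ⟨z.fst, hyD, ?_⟩
  apply ext_inner_right ℝ
  intro x
  have h := congrArg (fun w : WithLp 2 (F × ℝ) => ⟪w, (e₁.symm (x, 0) : WithLp 2 (F × ℝ))⟫) hzeq
  rw [LinearMap.adjoint_inner_left] at h
  rw [WithLp.prod_inner_apply, WithLp.prod_inner_apply] at h
  simp only [WithLp.ofLp_fst, WithLp.ofLp_snd] at h
  rw [hBfst, hBsnd] at h
  rw [show ((e₁.symm (x, 0) : WithLp 2 (F × ℝ))).fst = x from rfl,
    show ((e₁.symm (x, 0) : WithLp 2 (F × ℝ))).snd = (0:ℝ) from rfl,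
    hwcfst, hwcsnd] at h
  rw [zero_smul, zero_sub, inner_neg_right, inner_neg_left] at h
  simp only [RCLike.inner_apply, conj_trivial, mul_zero, add_zero] at h
  rw [LinearMap.adjoint_inner_left]
  linarith [h]

end AuxFinDim


theorem stmt18 (Q : Set E') (hQ : IsClosedConvexCone Q)
    (G : E →ᵃ[ℝ] E') (hGne : (⇑G ⁻¹' Q).Nonempty)
    (LG : E →ₗ[ℝ] E') (hLG : ∀ x, LG x = G 0 - G x)
    (hcond :
      (⇑G ⁻¹' intrinsicInterior ℝ Q).Nonempty ∨
      (⇑LG ⁻¹' intrinsicInterior ℝ Q).Nonempty ∨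
      ((LinearMap.ker (LinearMap.adjoint LG) : Set E') ∩
        intrinsicInterior ℝ (dualCone Q)).Nonempty ∨
      (∀ x ∈ Q ∩ Set.range ⇑LG, x ∈ Q ∩ -Q) ∨
      (∀ x ∈ dualCone Q ∩ (LinearMap.ker (LinearMap.adjoint LG) : Set E'),
        x ∈ ((Submodule.span ℝ Q)ᗮ : Set E'))) :
    {c : E | BddAbove ((fun x => ⟪c, x⟫) '' (⇑G ⁻¹' Q))} =
      ⇑(LinearMap.adjoint LG) '' dualCone Q := by
  classical
  set A : E →ₗ[ℝ] E' := LG with hA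
  set A' := LinearMap.adjoint LG with hA'
  set b : E' := G 0 with hb
  have hGx : ∀ x, G x = b - A x := by
    intro x
    rw [hA, hb, hLG x, sub_sub_cancel]
  have hmemX : ∀ x, x ∈ ⇑G ⁻¹' Q ↔ b - A x ∈ Q := by
    intro x
    rw [Set.mem_preimage, hGx x]
  have hD := isClosedConvexCone_dualCone Q
  ext c
  simp only [Set.mem_setOf_eq]
  constructor
  · -- hard direction
    intro hB
    obtain ⟨x₀, hx₀⟩ := hGne
    have hq₀ : b - A x₀ ∈ Q := (hmemX x₀).1 hx₀
    obtain ⟨μ, hμ⟩ := hB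
    have hub : ∀ x, b - A x ∈ Q → ⟪c, x⟫ ≤ μ := by
      intro x hx
      exact hμ ⟨x, (hmemX x).2 hx, rfl⟩
    have hrec : ∀ d, -(A d) ∈ Q → ⟪c, d⟫ ≤ 0 := by
      intro d hd
      by_contra hpos
      push_neg at hpos
      set t : ℝ := (μ - ⟪c, x₀⟫ + 1) / ⟪c, d⟫ with ht
      have hcx₀ : ⟪c, x₀⟫ ≤ μ := hub x₀ hq₀
      have htpos : 0 ≤ t := by
        apply div_nonneg _ (le_of_lt hpos)
        linarith
      have hfeas : b - A (x₀ + t • d) ∈ Q := by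
        have heq : b - A (x₀ + t • d) = (b - A x₀) + t • (-(A d)) := by
          rw [map_add, map_smul, smul_neg]
          abel
        rw [heq]
        exact hQ.add_mem' hq₀ (hQ.smul_mem hd htpos)
      have h1 := hub _ hfeas
      rw [inner_add_right, real_inner_smul_right] at h1
      have h2 : t * ⟪c, d⟫ = μ - ⟪c, x₀⟫ + 1 := by
        rw [ht, div_mul_cancel₀ _ hpos.ne']
      rw [h2] at h1
      linarith
    -- generic: c is in the closure of the image
    have hclosure : c ∈ closure (⇑A' '' dualCone Q) := by
      by_contra hc
      have hCC : IsClosedConvexCone (closure (⇑A' '' dualCone Q)) := by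
        apply isClosedConvexCone_closure
        · exact ⟨0, hD.zero_mem, map_zero _⟩
        · exact hD.convex.linear_image A'
        · rintro _ ⟨v, hv, rfl⟩ t ht
          exact ⟨t • v, hD.smul_mem hv ht, map_smul _ _ _⟩
      obtain ⟨u, hu1, hu2⟩ := cone_separation hCC hc
      have hAu : A u ∈ Q := by
        rw [← dualCone_dualCone hQ]
        intro y hy
        have h := hu1 (A' y) (subset_closure ⟨y, hy, rfl⟩)
        rw [hA'] at h
        rwa [LinearMap.adjoint_inner_left] at h
      have h3 : -(A (-u)) ∈ Q := by rwa [map_neg, neg_neg]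
      have h4 := hrec (-u) h3
      rw [inner_neg_right] at h4
      rw [real_inner_comm] at hu2
      linarith
    rcases hcond with h1 | h2 | h3 | h4 | h5
    · -- Slater condition
      obtain ⟨xb, hxb⟩ := h1
      rw [Set.mem_preimage, hGx xb] at hxb
      exact mem_adjoint_image_of_slater hQ A b hxb hub hrec
    · -- range meets relative interior
      obtain ⟨xt, hxt⟩ := h2
      rw [Set.mem_preimage] at hxt
      have hcl : IsClosed (⇑A' '' dualCone Q) := by
        apply isClosed_adjoint_image
        intro y hy h0 q hq
        have hz : ⟪A xt, y⟫ = 0 := by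
          rw [← LinearMap.adjoint_inner_right, h0, inner_zero_right]
        exact inner_eq_zero_of_mem_ri hy hxt hz hq
      rwa [← hcl.closure_eq]
    · -- kernel meets relative interior of dual
      obtain ⟨yb, hyb1, hyb2⟩ := h3
      rw [SetLike.mem_coe, LinearMap.mem_ker] at hyb1
      have himg : ⇑A' '' dualCone Q =
          ⇑A' '' ((Submodule.span ℝ (dualCone Q) : Submodule ℝ E') : Set E') := by
        apply Subset.antisymm (Set.image_mono Submodule.subset_span)
        rintro _ ⟨z, hz, rfl⟩
        obtain ⟨ε, hε, hmem⟩ := intrinsicInterior_shift_span hD.zero_mem hyb2 hz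
        refine ⟨ε⁻¹ • (yb + ε • z), hD.smul_mem hmem (inv_nonneg.2 (le_of_lt hε)), ?_⟩
        rw [map_smul, map_add, map_smul, hyb1, zero_add, smul_smul,
          inv_mul_cancel₀ hε.ne', one_smul]
      have hcl : IsClosed (⇑A' '' dualCone Q) := by
        rw [himg]
        have h9 : ⇑A' '' ((Submodule.span ℝ (dualCone Q) : Submodule ℝ E') : Set E') =
            (((Submodule.span ℝ (dualCone Q)).map A' : Submodule ℝ E) : Set E) := by
          rw [Submodule.map_coe]
        rw [h9]
        exact Submodule.closed_of_finiteDimensional _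
      rwa [← hcl.closure_eq]
    · -- lineality condition
      have hcl := isClosed_adjoint_image_of_lineality hQ A h4
      rwa [← hcl.closure_eq]
    · -- dual lineality condition
      have hcl : IsClosed (⇑A' '' dualCone Q) := by
        apply isClosed_adjoint_image
        intro y hy h0 q hq
        have h6 := h5 y ⟨hy, by rw [SetLike.mem_coe, LinearMap.mem_ker]; exact h0⟩
        rw [SetLike.mem_coe, Submodule.mem_orthogonal] at h6
        exact h6 q (Submodule.subset_span hq)
      rwa [← hcl.closure_eq]
  · -- easy direction
    rintro ⟨y, hy, rfl⟩
    refine ⟨⟪y, b⟫, ?_⟩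
    rintro r ⟨x, hx, rfl⟩
    have hqx : 0 ≤ ⟪b - A x, y⟫ := hy _ ((hmemX x).1 hx)
    have heq : ⟪A' y, x⟫ = ⟪y, A x⟫ := by
      rw [hA']
      exact LinearMap.adjoint_inner_left _ _ _
    have h2 : ⟪y, A x⟫ = ⟪y, b⟫ - ⟪y, b - A x⟫ := by
      rw [inner_sub_right]
      ring
    show ⟪A' y, x⟫ ≤ ⟪y, b⟫
    rw [heq, h2]
    have h3 : 0 ≤ ⟪y, b - A x⟫ := by rwa [real_inner_comm] at hqx
    linarith
end
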